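/- arXiv:2005.02716 — 3 statements merged into one kernel-verified Lean document; each statement's English description precedes it below -/
import Mathlib

section
/- If G is a connected (P3 + P1)-free finite simple graph, then every vertex of G of degree at least Δ(G) − 1 lies on every longest path of G (i.e., every vertex of degree at least Δ(G) − 1 is a Gallai vertex). -/
open SimpleGraph

/-- `p` is a longest path in the graph `G`. -/
def IsLongestPath {V : Type} (G : SimpleGraph V) {u v : V} (p : G.Walk u v) : Prop :=
  p.IsPath ∧ ∀ (a b : V) (q : G.Walk a b), q.IsPath → q.length ≤ p.length

/-- The graph `P₃ + P₁`: the disjoint union of a path on three vertices and an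
isolated vertex. -/
def P3plusP1 : SimpleGraph (Fin 4) := fromEdgeSet {s(0, 1), s(1, 2)}

namespace GallaiAux

variable {V : Type} {G : SimpleGraph V}

lemma P3adj (x y : Fin 4) : P3plusP1.Adj x y ↔
    ((x = 0 ∧ y = 1) ∨ (x = 1 ∧ y = 0) ∨ (x = 1 ∧ y = 2) ∨ (x = 2 ∧ y = 1)) := by
  rw [P3plusP1, SimpleGraph.fromEdgeSet_adj]
  simp only [Set.mem_insert_iff, Set.mem_singleton_iff, Sym2.eq_iff]
  revert x y
  decide

/-- If `a-b-c` is an induced `P₃` and `d` sees none of them, we contradict freeness. -/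
lemma no_induced (hfree : IsEmpty (P3plusP1 ↪g G)) {a b c d : V}
    (hab : G.Adj a b) (hbc : G.Adj b c) (hac' : a ≠ c) (hac : ¬G.Adj a c)
    (hda : ¬G.Adj d a) (hdb : ¬G.Adj d b) (hdc : ¬G.Adj d c) : False := by
  have hab' : a ≠ b := hab.ne
  have hbc' : b ≠ c := hbc.ne
  have hda' : d ≠ a := fun h => hdb (h ▸ hab)
  have hdb' : d ≠ b := fun h => hda (h ▸ hab.symm)
  have hdc' : d ≠ c := fun h => hdb (h ▸ hbc.symm)
  refine hfree.false ⟨⟨![a, b, c, d], ?_⟩, ?_⟩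
  · intro i j hij
    fin_cases i <;> fin_cases j <;> simp_all [Matrix.vecHead, Matrix.vecTail] <;> tauto
  · intro i j
    change G.Adj (![a, b, c, d] i) (![a, b, c, d] j) ↔ P3plusP1.Adj i j
    rw [P3adj]
    have hba := hab.symm
    have hcb := hbc.symm
    have hca : ¬ G.Adj c a := fun h => hac h.symm
    have had : ¬ G.Adj a d := fun h => hda h.symm
    have hbd : ¬ G.Adj b d := fun h => hdb h.symm
    have hcd : ¬ G.Adj c d := fun h => hdc h.symm
    fin_cases i <;> fin_cases j <;>
      simp_all [Matrix.vecHead, Matrix.vecTail, G.irrefl]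

end GallaiAux
namespace GallaiAux2
open GallaiAux
variable {V : Type} {G : SimpleGraph V}

lemma getD_lt {l : List V} {v : V} {t : ℕ} (h : t < l.length) : l.getD t v = l[t] := by
  rw [List.getD_eq_getElem?_getD, List.getElem?_eq_getElem h, Option.getD_some]

lemma adj_consec {l : List V} (hc : l.Chain' G.Adj) {v : V} {t : ℕ} (h : t + 1 < l.length) :
    G.Adj (l.getD t v) (l.getD (t + 1) v) := by
  rw [getD_lt (by omega), getD_lt h]
  have := List.isChain_iff_getElem.mp hc t (by omega)
  simpa [List.get_eq_getElem] using this

lemma ne_of_nodup {l : List V} (hnd : l.Nodup) {v : V} {s t : ℕ}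
    (hs : s < l.length) (ht : t < l.length) (hst : s ≠ t) :
    l.getD s v ≠ l.getD t v := by
  rw [getD_lt hs, getD_lt ht]
  exact fun h => hst ((hnd.getElem_inj_iff).mp h)

lemma getD_mem' {l : List V} {v : V} {t : ℕ} (h : t < l.length) : l.getD t v ∈ l := by
  rw [getD_lt h]; exact List.getElem_mem h

lemma rev_getD {l : List V} {v : V} {t : ℕ} (h : t < l.length) :
    l.reverse.getD t v = l.getD (l.length - 1 - t) v := by
  rw [getD_lt (by simpa using h), getD_lt (by omega), List.getElem_reverse]

lemma chain'_rev {l : List V} (hc : l.Chain' G.Adj) : l.reverse.Chain' G.Adj := by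
  unfold List.Chain'
  rw [List.isChain_reverse]
  exact List.IsChain.imp (fun a b h => h.symm) hc

lemma chain'_take {l : List V} (hc : l.Chain' G.Adj) (t : ℕ) : (l.take t).Chain' G.Adj := by
  have hc2 := hc
  rw [← List.take_append_drop t l] at hc2
  exact hc2.left_of_append

lemma chain'_drop {l : List V} (hc : l.Chain' G.Adj) (t : ℕ) : (l.drop t).Chain' G.Adj := by
  have hc2 := hc
  rw [← List.take_append_drop t l] at hc2
  exact hc2.right_of_append

lemma head?' {l : List V} {v : V} (h : 0 < l.length) : l.head? = some (l.getD 0 v) := by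
  rw [List.head?_eq_getElem?, List.getElem?_eq_getElem h, getD_lt h]

lemma getLast?' {l : List V} {v : V} (h : 0 < l.length) :
    l.getLast? = some (l.getD (l.length - 1) v) := by
  rw [List.getLast?_eq_getElem?, List.getElem?_eq_getElem (by omega), getD_lt (by omega)]

lemma head?_take' {l : List V} {v : V} {m : ℕ} (hm : 0 < m) (hl : 0 < l.length) :
    (l.take m).head? = some (l.getD 0 v) := by
  rw [List.head?_eq_getElem?, getD_lt hl, List.getElem?_take, if_pos hm,
    List.getElem?_eq_getElem hl]

lemma getLast?_take' {l : List V} {v : V} {t : ℕ} (ht : t < l.length) :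
    (l.take (t + 1)).getLast? = some (l.getD t v) := by
  rw [List.getLast?_eq_getElem?, List.length_take]
  have h1 : min (t + 1) l.length - 1 = t := by omega
  rw [h1, List.getElem?_take, if_pos (by omega), List.getElem?_eq_getElem ht, getD_lt ht]

lemma head?_drop' {l : List V} {v : V} {t : ℕ} (ht : t < l.length) :
    (l.drop t).head? = some (l.getD t v) := by
  rw [List.head?_eq_getElem?, List.getElem?_drop, Nat.add_zero,
    List.getElem?_eq_getElem ht, getD_lt ht]

lemma getLast?_drop' {l : List V} {v : V} {t : ℕ} (ht : t < l.length) :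
    (l.drop t).getLast? = some (l.getD (l.length - 1) v) := by
  rw [List.getLast?_eq_getElem?, List.length_drop, List.getElem?_drop]
  have h1 : t + (l.length - t - 1) = l.length - 1 := by omega
  rw [h1, List.getElem?_eq_getElem (by omega), getD_lt (by omega)]

lemma head?_append_left {l₁ l₂ : List V} (h : l₁ ≠ []) : (l₁ ++ l₂).head? = l₁.head? := by
  cases l₁ with
  | nil => exact absurd rfl h
  | cons a t => rfl

lemma idx_getD [DecidableEq V] {l : List V} (hnd : l.Nodup) {v : V} {r : ℕ} (hr : r < l.length) :
    l.idxOf (l.getD r v) = r := by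
  have hmem : l.getD r v ∈ l := getD_mem' hr
  have h1 : l.idxOf (l.getD r v) < l.length := List.idxOf_lt_length_iff.mpr hmem
  have h2 : l[l.idxOf (l.getD r v)] = l.getD r v := List.getElem_idxOf h1
  have h3 : l[l.idxOf (l.getD r v)] = l[r] := by rw [h2, getD_lt hr]
  exact (hnd.getElem_inj_iff).mp h3

/-- From a nonempty list whose consecutive members are adjacent, build a walk. -/
lemma exists_walk : ∀ (l : List V), l ≠ [] → l.Chain' G.Adj →
    ∃ (s t : V) (q : G.Walk s t), q.support = l := by
  intro l
  induction l with
  | nil => tauto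
  | cons a tl ih =>
    intro _ hc
    cases tl with
    | nil => exact ⟨a, a, SimpleGraph.Walk.nil, rfl⟩
    | cons b tl2 =>
      obtain ⟨s, t, q, hq⟩ := ih (by simp) (List.isChain_cons_cons.mp hc).2
      have hs : s = b := by
        have h1 := q.support_eq_cons
        rw [hq] at h1
        exact (List.cons.injEq _ _ _ _ ▸ h1).1.symm
      subst hs
      exact ⟨a, t, SimpleGraph.Walk.cons (List.isChain_cons_cons.mp hc).1 q,
        by rw [SimpleGraph.Walk.support_cons, hq]⟩

/-- A walk from outside a list into the list crosses its boundary. -/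
lemma cross {l : List V} : ∀ {s e : V}, G.Walk s e → s ∉ l → e ∈ l →
    ∃ u z, u ∉ l ∧ z ∈ l ∧ G.Adj u z := by
  intro s e W
  induction W with
  | nil => intro hs he; exact absurd he hs
  | @cons a b c h q ih =>
    intro hs he
    by_cases hb : b ∈ l
    · exact ⟨a, b, hs, hb, h⟩
    · exact ih hb he

end GallaiAux2
namespace GallaiAux3
open GallaiAux GallaiAux2
variable {V : Type} {G : SimpleGraph V} {v : V} {n : ℕ} {l : List V}

/-- Extending a maximum-length path by a fresh vertex at the head is impossible. -/
lemma ext_head (hmax : ∀ m : List V, m ≠ [] → m.Chain' G.Adj → m.Nodup → m.length ≤ n)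
    (hc : l.Chain' G.Adj) (hnd : l.Nodup) (hlen : l.length = n) (hn : 0 < n)
    {u : V} (hu : u ∉ l) (ha : G.Adj u (l.getD 0 v)) : False := by
  have h1 : (u :: l).Chain' G.Adj := by
    unfold List.Chain'; rw [List.isChain_cons]
    refine ⟨?_, hc⟩
    intro y hy
    rw [head?' (v := v) (by omega)] at hy
    simp only [Option.mem_def, Option.some.injEq] at hy
    rw [← hy]
    exact ha
  have h2 : (u :: l).Nodup := List.nodup_cons.mpr ⟨hu, hnd⟩
  have h3 := hmax (u :: l) (by simp) h1 h2
  simp only [List.length_cons] at h3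
  omega

/-- Inserting a fresh vertex between two consecutive path vertices is impossible. -/
lemma ins (hmax : ∀ m : List V, m ≠ [] → m.Chain' G.Adj → m.Nodup → m.length ≤ n)
    (hc : l.Chain' G.Adj) (hnd : l.Nodup) (hlen : l.length = n) (hv : v ∉ l)
    {t : ℕ} (ht : t + 1 < n)
    (h1 : G.Adj v (l.getD t v)) (h2 : G.Adj v (l.getD (t + 1) v)) : False := by
  have htl : t < l.length := by omega
  have hchain : (l.take (t + 1) ++ v :: l.drop (t + 1)).Chain' G.Adj := by
    unfold List.Chain'; rw [List.isChain_append]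
    refine ⟨chain'_take hc _, ?_, ?_⟩
    · rw [List.isChain_cons]
      refine ⟨?_, chain'_drop hc _⟩
      intro y hy
      rw [head?_drop' (v := v) (by omega)] at hy
      simp only [Option.mem_def, Option.some.injEq] at hy
      rw [← hy]
      exact h2
    · intro x hx y hy
      rw [getLast?_take' (v := v) htl] at hx
      simp only [List.head?_cons, Option.mem_def, Option.some.injEq] at hx hy
      rw [← hx, ← hy]
      exact h1.symm
  have hnodup : (l.take (t + 1) ++ v :: l.drop (t + 1)).Nodup := by
    rw [List.nodup_middle, List.take_append_drop]
    exact List.nodup_cons.mpr ⟨hv, hnd⟩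
  have h3 := hmax _ (by simp) hchain hnodup
  rw [List.length_append, List.length_take, List.length_cons, List.length_drop] at h3
  omega

/-- Rotation through a chord from the head plus the pendant `v`: impossible. -/
lemma c3 (hmax : ∀ m : List V, m ≠ [] → m.Chain' G.Adj → m.Nodup → m.length ≤ n)
    (hc : l.Chain' G.Adj) (hnd : l.Nodup) (hlen : l.length = n) (hv : v ∉ l)
    {t : ℕ} (ht : t + 1 < n)
    (hvt : G.Adj v (l.getD t v)) (h03 : G.Adj (l.getD 0 v) (l.getD (t + 1) v)) : False := by
  have htl : t < l.length := by omega
  have htake : (l.take (t + 1)).length = t + 1 := by rw [List.length_take]; omega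
  have hrevne : (l.take (t + 1)).reverse ≠ [] := by
    intro h
    have := congrArg List.length h
    simp [htake] at this
  have hperm : ((l.take (t + 1)).reverse ++ l.drop (t + 1)).Perm l := by
    have hp : ((l.take (t + 1)).reverse ++ l.drop (t + 1)).Perm
        (l.take (t + 1) ++ l.drop (t + 1)) :=
      List.Perm.append (List.reverse_perm _) (List.Perm.refl _)
    rwa [List.take_append_drop] at hp
  have hchain : (v :: ((l.take (t + 1)).reverse ++ l.drop (t + 1))).Chain' G.Adj := by
    unfold List.Chain'; rw [List.isChain_cons]
    constructor
    · intro y hy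
      rw [head?_append_left hrevne, List.head?_reverse, getLast?_take' (v := v) htl] at hy
      simp only [Option.mem_def, Option.some.injEq] at hy
      rw [← hy]
      exact hvt
    · rw [List.isChain_append]
      refine ⟨chain'_rev (chain'_take hc _), chain'_drop hc _, ?_⟩
      intro x hx y hy
      rw [List.getLast?_reverse, head?_take' (v := v) (by omega) (by omega)] at hx
      rw [head?_drop' (v := v) (by omega)] at hy
      simp only [Option.mem_def, Option.some.injEq] at hx hy
      rw [← hx, ← hy]
      exact h03
  have hnodup : (v :: ((l.take (t + 1)).reverse ++ l.drop (t + 1))).Nodup := by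
    rw [List.nodup_cons]
    exact ⟨fun h => hv (hperm.mem_iff.mp h), hperm.nodup_iff.mpr hnd⟩
  have h3 := hmax _ (by simp) hchain hnodup
  have h4 := hperm.length_eq
  simp only [List.length_cons] at h3
  omega

/-- A Hamiltonian-type cycle on the path vertices plus an edge entering from outside:
impossible. -/
lemma cycle (hmax : ∀ m : List V, m ≠ [] → m.Chain' G.Adj → m.Nodup → m.length ≤ n)
    (hc : l.Chain' G.Adj) (hnd : l.Nodup) (hlen : l.length = n) (hn : 0 < n)
    {u z : V} (hu : u ∉ l) (hz : z ∈ l) (hadj : G.Adj u z)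
    (hcyc : G.Adj (l.getD (n - 1) v) (l.getD 0 v)) : False := by
  classical
  set t := l.idxOf z with htdef
  have htl : t < l.length := List.idxOf_lt_length_iff.mpr hz
  have hzt : l.getD t v = z := by rw [getD_lt htl]; exact List.getElem_idxOf htl
  by_cases ht0 : t = 0
  · exact ext_head hmax hc hnd hlen hn hu (by rw [← ht0, hzt]; exact hadj)
  · have hperm : (l.drop t ++ l.take t).Perm l := by
      rw [← List.rotate_eq_drop_append_take (by omega)]
      exact List.rotate_perm l t
    have hchain : (u :: (l.drop t ++ l.take t)).Chain' G.Adj := by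
      unfold List.Chain'; rw [List.isChain_cons]
      constructor
      · intro y hy
        have hdropne : l.drop t ≠ [] := by
          intro h
          have := congrArg List.length h
          simp only [List.length_drop, List.length_nil] at this
          omega
        rw [head?_append_left hdropne, head?_drop' (v := v) htl] at hy
        simp only [Option.mem_def, Option.some.injEq] at hy
        rw [← hy, hzt]
        exact hadj
      · rw [List.isChain_append]
        refine ⟨chain'_drop hc _, chain'_take hc _, ?_⟩
        intro x hx y hy
        rw [getLast?_drop' (v := v) htl] at hx
        rw [head?_take' (v := v) (by omega) (by omega)] at hy
        simp only [Option.mem_def, Option.some.injEq] at hx hy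
        rw [← hx, ← hy, hlen]
        exact hcyc
    have hnodup : (u :: (l.drop t ++ l.take t)).Nodup := by
      rw [List.nodup_cons]
      exact ⟨fun h => hu (hperm.mem_iff.mp h), hperm.nodup_iff.mpr hnd⟩
    have h3 := hmax _ (by simp) hchain hnodup
    have h4 := hperm.length_eq
    simp only [List.length_cons] at h3
    omega

end GallaiAux3
namespace GallaiAux4
open GallaiAux GallaiAux2 GallaiAux3
variable {V : Type} {G : SimpleGraph V} {v : V} {n : ℕ} {l : List V}

/-- The off-path vertex `v` has a neighbour on the path. -/
lemma neighbor_exists (hfree : IsEmpty (P3plusP1 ↪g G)) (hconn : G.Connected)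
    (hmax : ∀ m : List V, m ≠ [] → m.Chain' G.Adj → m.Nodup → m.length ≤ n)
    (hc : l.Chain' G.Adj) (hnd : l.Nodup) (hlen : l.length = n) (hv : v ∉ l) (hn : 0 < n) :
    ∃ z ∈ l, G.Adj v z := by
  classical
  by_contra hno
  push_neg at hno
  have hchord : ∀ j, j < n → 1 ≤ j → G.Adj (l.getD 0 v) (l.getD j v) := by
    intro j
    induction j with
    | zero => omega
    | succ jj ih =>
      intro hj h1
      by_cases hjj : jj = 0
      · subst hjj
        exact adj_consec hc (by omega)
      · have hprev := ih (by omega) (by omega)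
        by_contra hnew
        exact no_induced hfree (a := l.getD 0 v) (b := l.getD jj v) (c := l.getD (jj+1) v)
          (d := v) hprev (adj_consec hc (by omega))
          (ne_of_nodup hnd (by omega) (by omega) (by omega)) hnew
          (hno _ (getD_mem' (by omega))) (hno _ (getD_mem' (by omega)))
          (hno _ (getD_mem' (by omega)))
  obtain ⟨W⟩ := hconn.preconnected v (l.getD 0 v)
  obtain ⟨u, z, hu, hz, ha⟩ := cross W hv (getD_mem' (by omega))
  by_cases hn1 : n = 1
  · have htl : l.idxOf z < l.length := List.idxOf_lt_length_iff.mpr hz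
    have ht0 : l.getD 0 v = z := by
      have h0 : l.idxOf z = 0 := by omega
      rw [← h0, getD_lt htl]
      exact List.getElem_idxOf htl
    rw [← ht0] at ha
    exact ext_head hmax hc hnd hlen hn hu ha
  · exact cycle hmax hc hnd hlen hn hu hz ha ((hchord (n-1) (by omega) (by omega)).symm)

/-- The head of the path is adjacent to every path-neighbour of `v`. -/
lemma L5a (hfree : IsEmpty (P3plusP1 ↪g G))
    (hmax : ∀ m : List V, m ≠ [] → m.Chain' G.Adj → m.Nodup → m.length ≤ n)
    (hc : l.Chain' G.Adj) (hnd : l.Nodup) (hlen : l.length = n) (hv : v ∉ l)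
    {z : V} (hz : z ∈ l) (hvz : G.Adj v z) :
    G.Adj (l.getD 0 v) z := by
  classical
  have hn : 0 < n := by rw [← hlen]; exact List.length_pos_iff.mpr (List.ne_nil_of_mem hz)
  have htl : l.idxOf z < l.length := List.idxOf_lt_length_iff.mpr hz
  set t := l.idxOf z with htdef
  have hzt : l.getD t v = z := by rw [getD_lt htl]; exact List.getElem_idxOf htl
  have hn0 : ¬ G.Adj v (l.getD 0 v) := fun h => ext_head hmax hc hnd hlen hn hv h
  have hnl : ¬ G.Adj v (l.getD (n-1) v) := by
    intro h
    have hrev : l.reverse.getD 0 v = l.getD (n-1) v := by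
      rw [rev_getD (by omega)]
      congr 1
      omega
    exact ext_head hmax (chain'_rev hc) (List.nodup_reverse.mpr hnd) (by simpa) hn
      (by simpa) (by rwa [hrev])
  have ht0 : t ≠ 0 := fun h => hn0 (by rw [h] at hzt; rw [hzt]; exact hvz)
  have htn : t ≠ n - 1 := fun h => hnl (by rw [h] at hzt; rw [hzt]; exact hvz)
  have ht1 : t + 1 < n := by omega
  have hvt : G.Adj v (l.getD t v) := by rw [hzt]; exact hvz
  have hvt1 : ¬ G.Adj v (l.getD (t+1) v) := fun h => ins hmax hc hnd hlen hv ht1 hvt h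
  have h0v : ¬ G.Adj (l.getD 0 v) v := fun h => hn0 h.symm
  have h0t1 : ¬ G.Adj (l.getD 0 v) (l.getD (t+1) v) := fun h =>
    c3 hmax hc hnd hlen hv ht1 hvt h
  by_contra hfin
  exact no_induced hfree (a := v) (b := l.getD t v) (c := l.getD (t+1) v) (d := l.getD 0 v)
    hvt (adj_consec hc (by omega)) (fun h => hv (h ▸ getD_mem' (by omega))) hvt1
    h0v (by rw [hzt]; exact hfin) h0t1

/-- Both ends of the path are adjacent to every path-neighbour of `v`. -/
lemma L5 (hfree : IsEmpty (P3plusP1 ↪g G))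
    (hmax : ∀ m : List V, m ≠ [] → m.Chain' G.Adj → m.Nodup → m.length ≤ n)
    (hc : l.Chain' G.Adj) (hnd : l.Nodup) (hlen : l.length = n) (hv : v ∉ l)
    {z : V} (hz : z ∈ l) (hvz : G.Adj v z) :
    G.Adj (l.getD 0 v) z ∧ G.Adj (l.getD (n-1) v) z := by
  have hn : 0 < n := by rw [← hlen]; exact List.length_pos_iff.mpr (List.ne_nil_of_mem hz)
  refine ⟨L5a hfree hmax hc hnd hlen hv hz hvz, ?_⟩
  have h := L5a hfree hmax (chain'_rev hc) (List.nodup_reverse.mpr hnd) (by simpa) (by simpa)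
    (List.mem_reverse.mpr hz) hvz
  have hrev : l.reverse.getD 0 v = l.getD (n-1) v := by
    rw [rev_getD (by omega)]
    congr 1
    omega
  rwa [hrev] at h

/-- Every vertex off the path is adjacent to every path-neighbour of `v`. -/
lemma L7 (hfree : IsEmpty (P3plusP1 ↪g G))
    (hmax : ∀ m : List V, m ≠ [] → m.Chain' G.Adj → m.Nodup → m.length ≤ n)
    (hc : l.Chain' G.Adj) (hnd : l.Nodup) (hlen : l.length = n) (hv : v ∉ l)
    {u : V} (hu : u ∉ l) {z : V} (hz : z ∈ l) (hvz : G.Adj v z) :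
    G.Adj u z := by
  classical
  have hn : 0 < n := by rw [← hlen]; exact List.length_pos_iff.mpr (List.ne_nil_of_mem hz)
  obtain ⟨h50, h5l⟩ := L5 hfree hmax hc hnd hlen hv hz hvz
  have hn0 : ¬ G.Adj v (l.getD 0 v) := fun h => ext_head hmax hc hnd hlen hn hv h
  have htl : l.idxOf z < l.length := List.idxOf_lt_length_iff.mpr hz
  have hzt : l.getD (l.idxOf z) v = z := by rw [getD_lt htl]; exact List.getElem_idxOf htl
  have ht0 : l.idxOf z ≠ 0 := fun h => hn0 (by rw [h] at hzt; rw [hzt]; exact hvz)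
  have hn2 : 2 ≤ n := by omega
  have hne0l : l.getD 0 v ≠ l.getD (n-1) v :=
    ne_of_nodup hnd (by omega) (by omega) (by omega)
  have hcycne : ¬ G.Adj (l.getD 0 v) (l.getD (n-1) v) := fun h =>
    cycle hmax hc hnd hlen hn hv hz hvz h.symm
  have hu0 : ¬ G.Adj u (l.getD 0 v) := fun h => ext_head hmax hc hnd hlen hn hu h
  have hul : ¬ G.Adj u (l.getD (n-1) v) := by
    intro h
    have hrev : l.reverse.getD 0 v = l.getD (n-1) v := by
      rw [rev_getD (by omega)]
      congr 1
      omega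
    exact ext_head hmax (chain'_rev hc) (List.nodup_reverse.mpr hnd) (by simpa) hn
      (by simpa) (by rwa [hrev])
  by_contra huz
  exact no_induced hfree (a := l.getD 0 v) (b := z) (c := l.getD (n-1) v) (d := u)
    h50 h5l.symm hne0l hcycne hu0 huz hul

/-- The chord lemma: predecessors of smaller path-neighbours of `v` are adjacent
to bigger path-neighbours. -/
lemma L9 (hfree : IsEmpty (P3plusP1 ↪g G))
    (hmax : ∀ m : List V, m ≠ [] → m.Chain' G.Adj → m.Nodup → m.length ≤ n)
    (hc : l.Chain' G.Adj) (hnd : l.Nodup) (hlen : l.length = n) (hv : v ∉ l)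
    {m i : ℕ} (hm : 1 ≤ m) (hmi : m + 2 ≤ i) (hin : i + 2 ≤ n)
    (hvm : G.Adj v (l.getD m v)) (hvi : G.Adj v (l.getD i v)) :
    G.Adj (l.getD (m - 1) v) (l.getD i v) := by
  classical
  have hml : m < l.length := by omega
  obtain ⟨h0m, hlm⟩ := L5 hfree hmax hc hnd hlen hv (getD_mem' hml) hvm
  set ys := (l.take m).reverse ++ l.getD m v :: (l.drop (m+1)).reverse with hys
  have hpm : ys.Perm l := by
    have h1 : ys.Perm (l.take m ++ l.getD m v :: l.drop (m+1)) :=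
      List.Perm.append (List.reverse_perm _) (List.Perm.cons _ (List.reverse_perm _))
    have h2 : l.take m ++ l.getD m v :: l.drop (m+1) = l := by
      rw [getD_lt hml, ← List.drop_eq_getElem_cons hml, List.take_append_drop]
    rwa [h2] at h1
  have hrlen : ((l.take m).reverse).length = m := by
    rw [List.length_reverse, List.length_take]
    omega
  have hrevne : (l.take m).reverse ≠ [] := by
    intro h
    have := congrArg List.length h
    rw [hrlen] at this
    simp at this
    omega
  have hysc : ys.Chain' G.Adj := by
    unfold List.Chain'; rw [List.isChain_append]
    refine ⟨chain'_rev (chain'_take hc _), ?_, ?_⟩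
    · rw [List.isChain_cons]
      refine ⟨?_, chain'_rev (chain'_drop hc _)⟩
      intro y hy
      rw [List.head?_reverse, getLast?_drop' (v := v) (by omega)] at hy
      simp only [Option.mem_def, Option.some.injEq] at hy
      have hll : l.length - 1 = n - 1 := by omega
      rw [← hy, hll]
      exact hlm.symm
    · intro x hx y hy
      rw [List.getLast?_reverse, head?_take' (v := v) (by omega) (by omega)] at hx
      simp only [List.head?_cons, Option.mem_def, Option.some.injEq] at hx hy
      rw [← hx, ← hy]
      exact h0m
  have hysnd : ys.Nodup := hpm.nodup_iff.mpr hnd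
  have hyslen : ys.length = n := by rw [hpm.length_eq, hlen]
  have hysv : v ∉ ys := fun h => hv (hpm.mem_iff.mp h)
  have h := L5a hfree hmax hysc hysnd hyslen hysv
    (z := l.getD i v) (hpm.mem_iff.mpr (getD_mem' (by omega))) hvi
  have hcomp : ys.getD 0 v = l.getD (m - 1) v := by
    have hb : 0 < ys.length := by omega
    have hm' : m - 1 + 1 = m := by omega
    have hh : ys.head? = some (l.getD (m - 1) v) := by
      rw [hys, head?_append_left hrevne, List.head?_reverse, ← hm',
        getLast?_take' (v := v) (by omega)]
      simp
    rw [List.head?_eq_getElem?, List.getElem?_eq_getElem hb] at hh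
    rw [getD_lt hb]
    exact Option.some.inj hh
  rwa [hcomp] at h

end GallaiAux4
open GallaiAux GallaiAux2 GallaiAux3 GallaiAux4 in
/-- In a connected `(P₃ + P₁)`-free graph, every vertex of degree at least `Δ(G) - 1`
lies on every longest path. -/
theorem gallai_of_P3P1_free {V : Type} [Fintype V] (G : SimpleGraph V) [DecidableRel G.Adj]
    (hconn : G.Connected) (hfree : IsEmpty (P3plusP1 ↪g G))
    (v : V) (hv : G.maxDegree - 1 ≤ G.degree v)
    {a b : V} (p : G.Walk a b) (hp : IsLongestPath G p) :
    v ∈ p.support := by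
  classical
  by_contra hvp
  set xs := p.support with hxs
  have hchain : xs.Chain' G.Adj := p.isChain_adj_support
  have hnd : xs.Nodup := (SimpleGraph.Walk.isPath_def p).mp hp.1
  set n := xs.length with hn
  have hlen : xs.length = n := rfl
  have hmax : ∀ m : List V, m ≠ [] → m.Chain' G.Adj → m.Nodup → m.length ≤ n := by
    intro m hne hc hnd'
    obtain ⟨s, t, q, hq⟩ := exists_walk m hne hc
    have hqp : q.IsPath := (SimpleGraph.Walk.isPath_def q).mpr (hq ▸ hnd')
    have h1 := hp.2 s t q hqp
    have h2 : m.length = q.length + 1 := by rw [← hq, SimpleGraph.Walk.length_support]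
    have h3 : n = p.length + 1 := by rw [hn, hxs, SimpleGraph.Walk.length_support]
    omega
  have hvxs : v ∉ xs := hvp
  have hn0 : 0 < n := by
    rw [hn, hxs]
    exact List.length_pos_iff.mpr p.support_ne_nil
  obtain ⟨z0, hz0, hvz0⟩ := neighbor_exists hfree hconn hmax hchain hnd hlen hvxs hn0
  set I : Finset ℕ := (Finset.range n).filter (fun t => G.Adj v (xs.getD t v)) with hI
  have hImem : ∀ t, t ∈ I ↔ (t < n ∧ G.Adj v (xs.getD t v)) := by
    intro t
    rw [hI, Finset.mem_filter, Finset.mem_range]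
  have hIne : I.Nonempty := by
    refine ⟨xs.idxOf z0, ?_⟩
    have htl : xs.idxOf z0 < xs.length := List.idxOf_lt_length_iff.mpr hz0
    have hz : xs.getD (xs.idxOf z0) v = z0 := by
      rw [getD_lt htl]
      exact List.getElem_idxOf htl
    rw [hImem]
    exact ⟨by omega, by rw [hz]; exact hvz0⟩
  set i := I.max' hIne with hidef
  have hiI := I.max'_mem hIne
  rw [← hidef, hImem] at hiI
  obtain ⟨hi_lt, hvi⟩ := hiI
  have hvnot0 : ¬ G.Adj v (xs.getD 0 v) := fun h => ext_head hmax hchain hnd hlen hn0 hvxs h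
  have hvnotl : ¬ G.Adj v (xs.getD (n-1) v) := by
    intro h
    have hrev : xs.reverse.getD 0 v = xs.getD (n-1) v := by
      rw [rev_getD (by omega), Nat.sub_zero, hlen]
    exact ext_head hmax (chain'_rev hchain) (List.nodup_reverse.mpr hnd) (by simpa) hn0
      (by simpa) (by rwa [hrev])
  have hi1 : 1 ≤ i := by
    rcases Nat.eq_zero_or_pos i with h | h
    · exact absurd (h ▸ hvi) hvnot0
    · exact h
  have hi2 : i + 2 ≤ n := by
    have : i ≠ n - 1 := fun h => hvnotl (h ▸ hvi)
    omega
  have hvi0 : ¬ G.Adj v (xs.getD (i-1) v) := by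
    intro h
    exact ins hmax hchain hnd hlen hvxs (t := i-1) (by omega) h
      (by rw [show i - 1 + 1 = i by omega]; exact hvi)
  have hvi1 : ¬ G.Adj v (xs.getD (i+1) v) :=
    fun h => ins hmax hchain hnd hlen hvxs (t := i) (by omega) hvi h
  have hidx : ∀ r : ℕ, r < n → xs.idxOf (xs.getD r v) = r :=
    fun r hr => idx_getD hnd (by omega)
  have hstep0 : G.Adj (xs.getD (i-1) v) (xs.getD i v) := by
    have h := adj_consec hchain (v := v) (t := i-1) (by omega)
    rwa [show i - 1 + 1 = i by omega] at h
  have hstep1 : G.Adj (xs.getD i v) (xs.getD (i+1) v) :=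
    adj_consec hchain (by omega)
  set A := G.neighborFinset v with hA
  set B := G.neighborFinset (xs.getD i v) with hB
  set S := insert (xs.getD (i-1) v) (insert (xs.getD (i+1) v) A) with hS
  set f : V → V := fun u =>
    if u = xs.getD (i-1) v then u
    else if u = xs.getD (i+1) v then u
    else if u = xs.getD i v then v
    else if u ∈ xs then xs.getD (xs.idxOf u - 1) v
    else u with hf
  set g : V → V := fun w =>
    if w = v then xs.getD i v
    else if w ∈ xs then
      (if xs.idxOf w = i - 1 ∨ xs.idxOf w = i + 1 then w
       else xs.getD (xs.idxOf w + 1) v)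
    else w with hg
  have key : ∀ u ∈ S, f u ∈ B ∧ g (f u) = u := by
    intro u hu
    by_cases h1 : u = xs.getD (i-1) v
    · have hfu : f u = u := by rw [hf]; simp only [if_pos h1]
      constructor
      · rw [hfu, h1, hB, SimpleGraph.mem_neighborFinset]
        exact hstep0.symm
      · rw [hfu, hg]
        simp only
        rw [if_neg (by rw [h1]; exact fun h => hvxs (h ▸ getD_mem' (by omega))),
          if_pos (by rw [h1]; exact getD_mem' (by omega))]
        rw [if_pos (by rw [h1, hidx (i-1) (by omega)]; left; rfl)]
    · by_cases h2 : u = xs.getD (i+1) v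
      · have hfu : f u = u := by rw [hf]; simp only [if_neg h1, if_pos h2]
        constructor
        · rw [hfu, h2, hB, SimpleGraph.mem_neighborFinset]
          exact hstep1
        · rw [hfu, hg]
          simp only
          rw [if_neg (by rw [h2]; exact fun h => hvxs (h ▸ getD_mem' (by omega))),
            if_pos (by rw [h2]; exact getD_mem' (by omega))]
          rw [if_pos (by rw [h2, hidx (i+1) (by omega)]; right; rfl)]
      · by_cases h3 : u = xs.getD i v
        · have hfu : f u = v := by rw [hf]; simp only [if_neg h1, if_neg h2, if_pos h3]
          constructor
          · rw [hfu, hB, SimpleGraph.mem_neighborFinset]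
            exact hvi.symm
          · rw [hfu, hg]
            simp only [if_pos rfl]
            exact h3.symm
        · have huA : u ∈ A := by
            rw [hS, Finset.mem_insert, Finset.mem_insert] at hu
            rcases hu with h | h | h
            · exact absurd h h1
            · exact absurd h h2
            · exact h
          have hadj_vu : G.Adj v u := by
            rw [hA, SimpleGraph.mem_neighborFinset] at huA
            exact huA
          by_cases h4 : u ∈ xs
          · set m := xs.idxOf u with hmdef
            have hml : m < xs.length := List.idxOf_lt_length_iff.mpr h4
            have hum : xs.getD m v = u := by
              rw [getD_lt hml]
              exact List.getElem_idxOf hml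
            have hmI : m ∈ I := by
              rw [hImem]
              exact ⟨by omega, by rw [hum]; exact hadj_vu⟩
            have hmle : m ≤ i := Finset.le_max' I m hmI
            have hm_ne_i : m ≠ i := fun h => h3 (by rw [← hum, h])
            have hm_ne_i1 : m ≠ i - 1 := fun h => h1 (by rw [← hum, h])
            have hm1 : 1 ≤ m := by
              rcases Nat.eq_zero_or_pos m with h | h
              · exact absurd (by rw [← h, hum]; exact hadj_vu : G.Adj v (xs.getD 0 v)) hvnot0
              · exact h
            have hmi : m + 2 ≤ i := by omega
            have h9 := L9 hfree hmax hchain hnd hlen hvxs hm1 hmi hi2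
              (by rw [hum]; exact hadj_vu) hvi
            have hfu : f u = xs.getD (m-1) v := by
              rw [hf]
              simp only [if_neg h1, if_neg h2, if_neg h3, if_pos h4]
              rfl
            constructor
            · rw [hfu, hB, SimpleGraph.mem_neighborFinset]
              exact h9.symm
            · rw [hfu, hg]
              simp only
              rw [if_neg (fun h => hvxs (by rw [← h]; exact getD_mem' (show m - 1 < xs.length by omega))),
                if_pos (getD_mem' (show m - 1 < xs.length by omega)),
                hidx (m-1) (by omega)]
              rw [if_neg (by omega)]
              rw [show m - 1 + 1 = m by omega, hum]
          · have hfu : f u = u := by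
              rw [hf]
              simp only [if_neg h1, if_neg h2, if_neg h3, if_neg h4]
            constructor
            · rw [hfu, hB, SimpleGraph.mem_neighborFinset]
              exact (L7 hfree hmax hchain hnd hlen hvxs h4
                (getD_mem' (show i < xs.length by omega)) hvi).symm
            · rw [hfu, hg]
              simp only
              rw [if_neg hadj_vu.ne', if_neg h4]
  have hinj : Set.InjOn f ↑S := by
    intro u1 h1 u2 h2 he
    have k1 := (key u1 h1).2
    have k2 := (key u2 h2).2
    rw [← k1, ← k2, he]
  have hcard := Finset.card_le_card_of_injOn f (fun u hu => (key u hu).1) hinj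
  have hA1 : xs.getD (i+1) v ∉ A := by
    rw [hA, SimpleGraph.mem_neighborFinset]
    exact hvi1
  have hA0 : xs.getD (i-1) v ∉ insert (xs.getD (i+1) v) A := by
    rw [Finset.mem_insert]
    push_neg
    refine ⟨ne_of_nodup hnd (by omega) (by omega) (by omega), ?_⟩
    rw [hA, SimpleGraph.mem_neighborFinset]
    exact hvi0
  have hScard : S.card = A.card + 2 := by
    rw [hS, Finset.card_insert_of_notMem hA0, Finset.card_insert_of_notMem hA1]
  have hdegA : A.card = G.degree v := rfl
  have hdegB : B.card = G.degree (xs.getD i v) := rfl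
  have hmaxdeg := G.degree_le_maxDegree (xs.getD i v)
  omega
end

section
/- If G is a connected finite simple graph with independence number α(G) ≤ 3, then every longest path of G contains every vertex of degree at least Δ(G) − 1. -/
open SimpleGraph

namespace LP
open List


variable {V : Type} {G : SimpleGraph V}

/-- `[f 0, f 1, ..., f k]` -/
def seqL (f : ℕ → V) : ℕ → List V
  | 0 => [f 0]
  | k+1 => f 0 :: seqL (fun t => f (t+1)) k

@[simp] lemma seqL_length (f : ℕ → V) (k : ℕ) : (seqL f k).length = k + 1 := by
  induction k generalizing f with
  | zero => rfl
  | succ k ih => simp [seqL, ih]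

lemma seqL_ne_nil (f : ℕ → V) (k : ℕ) : seqL f k ≠ [] := by
  cases k <;> simp [seqL]

@[simp] lemma head?_seqL (f : ℕ → V) (k : ℕ) : (seqL f k).head? = some (f 0) := by
  cases k <;> rfl

@[simp] lemma getLast?_seqL (f : ℕ → V) (k : ℕ) : (seqL f k).getLast? = some (f k) := by
  induction k generalizing f with
  | zero => rfl
  | succ k ih =>
    rw [seqL, List.getLast?_cons, ih]; rfl

lemma mem_seqL {f : ℕ → V} {k : ℕ} {x : V} : x ∈ seqL f k ↔ ∃ t ≤ k, x = f t := by
  induction k generalizing f with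
  | zero => simp [seqL, eq_comm]
  | succ k ih =>
    simp only [seqL, List.mem_cons, ih]
    constructor
    · rintro (rfl | ⟨t, ht, rfl⟩)
      · exact ⟨0, Nat.zero_le _, rfl⟩
      · exact ⟨t+1, by omega, rfl⟩
    · rintro ⟨t, ht, rfl⟩
      cases t with
      | zero => exact Or.inl rfl
      | succ t => exact Or.inr ⟨t, by omega, rfl⟩

lemma chain'_seqL {A : V → V → Prop} {f : ℕ → V} {k : ℕ}
    (h : ∀ t < k, A (f t) (f (t+1))) : List.Chain' A (seqL f k) := by
  induction k generalizing f with
  | zero => exact List.isChain_singleton _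
  | succ k ih =>
    rw [seqL]
    refine List.isChain_cons.2 ⟨?_, ih fun t ht => h (t+1) (by omega)⟩
    intro y hy
    rw [head?_seqL] at hy
    cases hy
    exact h 0 (by omega)

lemma nodup_seqL {f : ℕ → V} {k : ℕ}
    (h : ∀ s ≤ k, ∀ t ≤ k, f s = f t → s = t) : (seqL f k).Nodup := by
  induction k generalizing f with
  | zero => simp [seqL]
  | succ k ih =>
    rw [seqL, List.nodup_cons]
    constructor
    · rw [mem_seqL]
      rintro ⟨t, ht, hft⟩
      have := h (t+1) (by omega) 0 (by omega) hft.symm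
      omega
    · exact ih fun s hs t ht hst => by
        have := h (s+1) (by omega) (t+1) (by omega) hst; omega

lemma exists_walk_of_chain : ∀ (l : List V), l.Chain' G.Adj → l ≠ [] →
    ∃ x y, ∃ w : G.Walk x y, w.support = l
  | [], _, hne => absurd rfl hne
  | [x], _, _ => ⟨x, x, Walk.nil, rfl⟩
  | x :: y :: r, hc, _ => by
    obtain ⟨x', y', w, hw⟩ := exists_walk_of_chain (y :: r) hc.tail (by simp)
    have hx' : x' = y := by
      have := w.support_eq_cons
      rw [hw] at this
      exact (List.cons.injEq _ _ _ _ ▸ this).1.symm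
    subst hx'
    have hadj : G.Adj x x' := by
      rename_i hxx'; exact (List.isChain_cons_cons.1 hc).1
    exact ⟨x, y', Walk.cons hadj w, by simp [hw]⟩

lemma length_le_of_longest {u v : V} {p : G.Walk u v} (hp : IsLongestPath G p)
    (l : List V) (hc : l.Chain' G.Adj) (hnd : l.Nodup) : l.length ≤ p.length + 1 := by
  rcases eq_or_ne l [] with rfl | hne
  · simp
  obtain ⟨x, y, w, hw⟩ := exists_walk_of_chain l hc hne
  have hpath : w.IsPath := by rw [Walk.isPath_def, hw]; exact hnd
  have := hp.2 x y w hpath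
  have hl : w.support.length = w.length + 1 := w.length_support
  rw [hw] at hl
  omega

lemma getVert_inj {u v : V} {p : G.Walk u v} (hp : p.IsPath) :
    ∀ {i j : ℕ}, i ≤ p.length → j ≤ p.length → p.getVert i = p.getVert j → i = j := by
  induction p with
  | nil => intro i j hi hj _; simp only [Walk.length_nil] at hi hj; omega
  | @cons u x v hadj q ih =>
    intro i j hi hj hij
    have hq : q.IsPath := hp.of_cons
    have hu : u ∉ q.support := by
      have := hp
      rw [Walk.cons_isPath_iff] at this
      exact this.2
    cases i with
    | zero =>
      cases j with
      | zero => rfl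
      | succ j =>
        exfalso
        rw [Walk.getVert_zero, Walk.getVert_cons_succ] at hij
        exact hu (Walk.mem_support_iff_exists_getVert.2 ⟨j, hij.symm, by
          simp only [Walk.length_cons] at hj; omega⟩)
    | succ i =>
      cases j with
      | zero =>
        exfalso
        rw [Walk.getVert_zero, Walk.getVert_cons_succ] at hij
        exact hu (Walk.mem_support_iff_exists_getVert.2 ⟨i, hij, by
          simp only [Walk.length_cons] at hi; omega⟩)
      | succ j =>
        rw [Walk.getVert_cons_succ, Walk.getVert_cons_succ] at hij
        simp only [Walk.length_cons] at hi hj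
        have := ih hq (by omega) (by omega) hij
        omega

lemma crossing : ∀ {x y : V} (w : G.Walk x y) (P : V → Prop), ¬ P x → P y →
    ∃ u z, ¬ P u ∧ P z ∧ G.Adj u z := by
  intro x y w
  induction w with
  | nil => intro P hx hy; exact absurd hy hx
  | @cons u x' v hadj q ih =>
    intro P hx hy
    by_cases hP : P x'
    · exact ⟨u, x', hx, hP, hadj⟩
    · exact ih P hP hy

lemma clique_chain' : ∀ (l : List V), l.Nodup →
    (∀ x ∈ l, ∀ y ∈ l, x ≠ y → G.Adj x y) → l.Chain' G.Adj
  | [], _, _ => List.isChain_nil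
  | [x], _, _ => List.isChain_singleton _
  | x :: y :: r, hnd, h => by
    show List.IsChain _ _
    rw [List.isChain_cons_cons]
    refine ⟨h x (by simp) y (by simp) ?_, ?_⟩
    · rintro rfl; simp at hnd
    · exact clique_chain' (y :: r) hnd.of_cons
        (fun a ha c hc hac => h a (by simp [ha]) c (by simp [hc]) hac)


section Seg
variable {u v : V} (p : G.Walk u v)

/-- `[p_j, ..., p_i]`, ascending (needs `j ≤ i`). -/
def ascL (j i : ℕ) : List V := seqL (fun t => p.getVert (j+t)) (i-j)

/-- `[p_i, ..., p_j]`, descending (needs `j ≤ i`). -/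
def descL (i j : ℕ) : List V := seqL (fun t => p.getVert (i-t)) (i-j)

@[simp] lemma length_ascL (j i : ℕ) : (ascL p j i).length = i - j + 1 := seqL_length _ _
@[simp] lemma length_descL (i j : ℕ) : (descL p i j).length = i - j + 1 := seqL_length _ _

lemma head?_ascL (j i : ℕ) : (ascL p j i).head? = some (p.getVert j) := by
  rw [ascL, head?_seqL]; norm_num
lemma getLast?_ascL {j i : ℕ} (h : j ≤ i) : (ascL p j i).getLast? = some (p.getVert i) := by
  rw [ascL, getLast?_seqL]; congr 2; omega
lemma head?_descL {i j : ℕ} : (descL p i j).head? = some (p.getVert i) := by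
  rw [descL, head?_seqL]; norm_num
lemma getLast?_descL {i j : ℕ} (h : j ≤ i) : (descL p i j).getLast? = some (p.getVert j) := by
  rw [descL, getLast?_seqL]; congr 2; omega

lemma mem_ascL {j i : ℕ} (h : j ≤ i) {x : V} :
    x ∈ ascL p j i ↔ ∃ t, j ≤ t ∧ t ≤ i ∧ x = p.getVert t := by
  rw [ascL, mem_seqL]
  constructor
  · rintro ⟨t, ht, rfl⟩; exact ⟨j + t, by omega, by omega, rfl⟩
  · rintro ⟨t, ht1, ht2, rfl⟩; exact ⟨t - j, by omega, by congr 1; omega⟩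

lemma mem_descL {i j : ℕ} (h : j ≤ i) {x : V} :
    x ∈ descL p i j ↔ ∃ t, j ≤ t ∧ t ≤ i ∧ x = p.getVert t := by
  rw [descL, mem_seqL]
  constructor
  · rintro ⟨t, ht, rfl⟩; exact ⟨i - t, by omega, by omega, rfl⟩
  · rintro ⟨t, ht1, ht2, rfl⟩; exact ⟨i - t, by omega, by congr 1; omega⟩

lemma chain'_ascL {j i : ℕ} (hi : i ≤ p.length) : (ascL p j i).Chain' G.Adj := by
  refine chain'_seqL fun t ht => ?_
  have : j + t + 1 = j + (t+1) := by omega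
  rw [← this]
  exact p.adj_getVert_succ (by omega)

lemma chain'_descL {i j : ℕ} (hi : i ≤ p.length) : (descL p i j).Chain' G.Adj := by
  refine chain'_seqL fun t ht => ?_
  have h1 : i - t = (i - (t+1)) + 1 := by omega
  rw [h1]
  exact (p.adj_getVert_succ (by omega)).symm

lemma nodup_ascL {j i : ℕ} (hp : p.IsPath) (hj : j ≤ i) (hi : i ≤ p.length) : (ascL p j i).Nodup := by
  refine nodup_seqL fun s hs t ht hst => ?_
  have := getVert_inj hp (i := j+s) (j := j+t) (by omega) (by omega) hst
  omega

lemma nodup_descL {i j : ℕ} (hp : p.IsPath) (hi : i ≤ p.length) : (descL p i j).Nodup := by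
  refine nodup_seqL fun s hs t ht hst => ?_
  have := getVert_inj hp (i := i-s) (j := i-t) (by omega) (by omega) hst
  omega

lemma mem_support_of_mem_ascL {j i : ℕ} (h : j ≤ i) (hi : i ≤ p.length) {x : V}
    (hx : x ∈ ascL p j i) : x ∈ p.support := by
  rw [mem_ascL p h] at hx
  obtain ⟨t, _, ht2, rfl⟩ := hx
  exact Walk.mem_support_iff_exists_getVert.2 ⟨t, rfl, by omega⟩

lemma mem_support_of_mem_descL {i j : ℕ} (h : j ≤ i) (hi : i ≤ p.length) {x : V}
    (hx : x ∈ descL p i j) : x ∈ p.support := by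
  rw [mem_descL p h] at hx
  obtain ⟨t, _, ht2, rfl⟩ := hx
  exact Walk.mem_support_iff_exists_getVert.2 ⟨t, rfl, by omega⟩

lemma ascL_ne_nil (j i : ℕ) : ascL p j i ≠ [] := seqL_ne_nil _ _
lemma descL_ne_nil (i j : ℕ) : descL p i j ≠ [] := seqL_ne_nil _ _

end Seg

section SList
variable [DecidableEq V]


/-- list of the elements of `S` ending at `u`. -/
noncomputable def endL (S : Finset V) (u : V) : List V := (S.erase u).toList ++ [u]
/-- list of the elements of `S` starting at `w`. -/
noncomputable def startL (S : Finset V) (w : V) : List V := w :: (S.erase w).toList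
/-- list of the elements of `S` starting at `u`, ending at `u'`. -/
noncomputable def midL (S : Finset V) (u u' : V) : List V := u :: (((S.erase u).erase u').toList ++ [u'])

variable {S : Finset V} {u u' : V}

lemma length_endL (hu : u ∈ S) : (endL S u).length = S.card := by
  simp [endL, Finset.length_toList, Finset.card_erase_of_mem hu]
  have := Finset.card_pos.2 ⟨u, hu⟩; omega

lemma length_startL (hu : u ∈ S) : (startL S u).length = S.card := by
  simp [startL, Finset.length_toList, Finset.card_erase_of_mem hu]
  have := Finset.card_pos.2 ⟨u, hu⟩; omega

lemma length_midL (hu : u ∈ S) (hu' : u' ∈ S) (hne : u ≠ u') :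
    (midL S u u').length = S.card := by
  simp [midL, Finset.length_toList, Finset.card_erase_of_mem,
    Finset.mem_erase, hne.symm, hu', hu]
  have := Finset.card_pos.2 ⟨u, hu⟩
  have : 2 ≤ S.card := Finset.one_lt_card.2 ⟨u, hu, u', hu', hne⟩
  omega

lemma mem_endL (hu : u ∈ S) {x : V} : x ∈ endL S u ↔ x ∈ S := by
  simp only [endL, List.mem_append, Finset.mem_toList, Finset.mem_erase, List.mem_singleton]
  constructor
  · rintro (⟨_, h⟩ | rfl) <;> [exact h; exact hu]
  · intro h; rcases eq_or_ne x u with rfl | hne; · exact Or.inr rfl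
    · exact Or.inl ⟨hne, h⟩

lemma mem_startL (hu : u ∈ S) {x : V} : x ∈ startL S u ↔ x ∈ S := by
  simp only [startL, List.mem_cons, Finset.mem_toList, Finset.mem_erase]
  constructor
  · rintro (rfl | ⟨_, h⟩) <;> [exact hu; exact h]
  · intro h; rcases eq_or_ne x u with rfl | hne; · exact Or.inl rfl
    · exact Or.inr ⟨hne, h⟩

lemma mem_midL (hu : u ∈ S) (hu' : u' ∈ S) {x : V} : x ∈ midL S u u' ↔ x ∈ S := by
  simp only [midL, List.mem_cons, List.mem_append, Finset.mem_toList, Finset.mem_erase,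
    List.mem_singleton]
  constructor
  · rintro (rfl | ⟨_, _, h⟩ | (rfl | h))
    · exact hu
    · exact h
    · exact hu'
    · exact absurd h List.not_mem_nil
  · intro h
    rcases eq_or_ne x u with rfl | hne; · exact Or.inl rfl
    rcases eq_or_ne x u' with rfl | hne'; · exact Or.inr (Or.inr (Or.inl rfl))
    exact Or.inr (Or.inl ⟨hne', hne, h⟩)

lemma nodup_endL : (endL S u).Nodup := by
  rw [endL, List.nodup_append']
  refine ⟨Finset.nodup_toList _, List.nodup_singleton u, ?_⟩
  intro x hx hx'
  rw [List.mem_singleton] at hx'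
  subst hx'
  rw [Finset.mem_toList, Finset.mem_erase] at hx
  exact hx.1 rfl

lemma nodup_startL : (startL S u).Nodup := by
  rw [startL, List.nodup_cons]
  refine ⟨?_, Finset.nodup_toList _⟩
  rw [Finset.mem_toList, Finset.mem_erase]
  rintro ⟨h, -⟩; exact h rfl

lemma nodup_midL (hne : u ≠ u') : (midL S u u').Nodup := by
  rw [midL, List.nodup_cons, List.nodup_append']
  refine ⟨?_, Finset.nodup_toList _, List.nodup_singleton _, ?_⟩
  · intro h
    rw [List.mem_append] at h
    rcases h with h | h
    · rw [Finset.mem_toList, Finset.mem_erase, Finset.mem_erase] at h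
      exact h.2.1 rfl
    · rw [List.mem_singleton] at h
      exact hne h
  · intro x hx hx'
    rw [List.mem_singleton] at hx'
    subst hx'
    rw [Finset.mem_toList, Finset.mem_erase] at hx
    exact hx.1 rfl

@[simp] lemma getLast?_endL : (endL S u).getLast? = some u := List.getLast?_concat
@[simp] lemma head?_startL : (startL S u).head? = some u := rfl
@[simp] lemma head?_midL : (midL S u u').head? = some u := rfl
@[simp] lemma getLast?_midL : (midL S u u').getLast? = some u' := by
  rw [midL, List.getLast?_cons, List.getLast?_concat]; rfl

lemma endL_ne_nil : endL S u ≠ [] := by simp [endL]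
lemma startL_ne_nil : startL S u ≠ [] := by simp [startL]
lemma midL_ne_nil : midL S u u' ≠ [] := by simp [midL]

lemma clique_list_chain' (hcl : ∀ x ∈ S, ∀ y ∈ S, x ≠ y → G.Adj x y)
    {l : List V} (hnd : l.Nodup) (hmem : ∀ x ∈ l, x ∈ S) : l.Chain' G.Adj := by
  induction l with
  | nil => exact List.isChain_nil
  | cons x l ih =>
    rw [List.nodup_cons] at hnd
    refine List.isChain_cons.2 ⟨?_, ih hnd.2 fun y hy => hmem y (by simp [hy])⟩
    intro y hy
    have hyl : y ∈ l := List.mem_of_mem_head? hy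
    exact hcl x (hmem x (by simp)) y (hmem y (by simp [hyl])) (by rintro rfl; exact hnd.1 hyl)

lemma chain'_endL (hcl : ∀ x ∈ S, ∀ y ∈ S, x ≠ y → G.Adj x y) (hu : u ∈ S) :
    (endL S u).Chain' G.Adj :=
  clique_list_chain' hcl nodup_endL fun x hx => (mem_endL hu).1 hx

lemma chain'_startL (hcl : ∀ x ∈ S, ∀ y ∈ S, x ≠ y → G.Adj x y) (hu : u ∈ S) :
    (startL S u).Chain' G.Adj :=
  clique_list_chain' hcl nodup_startL fun x hx => (mem_startL hu).1 hx

lemma chain'_midL (hcl : ∀ x ∈ S, ∀ y ∈ S, x ≠ y → G.Adj x y) (hu : u ∈ S) (hu' : u' ∈ S)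
    (hne : u ≠ u') : (midL S u u').Chain' G.Adj :=
  clique_list_chain' hcl (nodup_midL hne) fun x hx => (mem_midL hu hu').1 hx

end SList

/-! ### Path constructions -/

section Cons
variable [DecidableEq V] {a b : V} {p : G.Walk a b}

lemma glue {l₁ l₂ : List V} {x y : V} (h1 : l₁.getLast? = some x) (h2 : l₂.head? = some y)
    (hadj : G.Adj x y) : ∀ c ∈ l₁.getLast?, ∀ d ∈ l₂.head?, G.Adj c d := by
  rw [h1, h2]
  intro c hc d hd
  rw [Option.mem_def, Option.some.injEq] at hc hd
  subst hc; subst hd; exact hadj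

lemma disjoint_seg (hpath : p.IsPath) {l1 l2 : List V} {j1 i1 j2 i2 : ℕ}
    (hm1 : ∀ x ∈ l1, ∃ t, j1 ≤ t ∧ t ≤ i1 ∧ x = p.getVert t)
    (hm2 : ∀ x ∈ l2, ∃ t, j2 ≤ t ∧ t ≤ i2 ∧ x = p.getVert t)
    (hi1 : i1 ≤ p.length) (hi2 : i2 ≤ p.length)
    (hsep : i1 < j2 ∨ i2 < j1) : l1.Disjoint l2 := by
  intro x hx hy
  obtain ⟨t1, ht1a, ht1b, rfl⟩ := hm1 x hx
  obtain ⟨t2, ht2a, ht2b, heq⟩ := hm2 _ hy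
  have := getVert_inj hpath (by omega : t1 ≤ p.length) (by omega : t2 ≤ p.length) heq
  omega

lemma disjoint_out {S : Finset V} (hS : ∀ y ∈ S, y ∉ p.support) {l1 l2 : List V}
    (hm1 : ∀ x ∈ l1, x ∈ S) (hm2 : ∀ x ∈ l2, x ∈ p.support) : l1.Disjoint l2 :=
  fun x hx hy => hS x (hm1 x hx) (hm2 x hy)

lemma longest_reverse (hp : IsLongestPath G p) : IsLongestPath G p.reverse :=
  ⟨hp.1.reverse, fun x y q hq => by rw [Walk.length_reverse]; exact hp.2 x y q hq⟩

lemma head?_support : p.support.head? = some a := by rw [p.support_eq_cons]; rfl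

lemma no_ext_start (hp : IsLongestPath G p) {x : V} (hx : x ∉ p.support)
    (hadj : G.Adj x a) : False := by
  have hc : (x :: p.support).Chain' G.Adj := by
    refine List.isChain_cons.2 ⟨?_, p.isChain_adj_support⟩
    intro y hy
    rw [head?_support, Option.mem_def, Option.some.injEq] at hy
    subst hy; exact hadj
  have hnd : (x :: p.support).Nodup := List.nodup_cons.2 ⟨hx, (Walk.isPath_def _).1 hp.1⟩
  have := length_le_of_longest hp _ hc hnd
  have h2 := p.length_support
  simp only [List.length_cons] at this
  omega

lemma no_ext_end (hp : IsLongestPath G p) {x : V} (hx : x ∉ p.support)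
    (hadj : G.Adj x b) : False :=
  no_ext_start (longest_reverse hp)
    (by rw [Walk.support_reverse, List.mem_reverse]; exact hx) hadj

lemma no_loop (hp : IsLongestPath G p) (hab : G.Adj a b) {x : V} (hx : x ∉ p.support)
    {m : ℕ} (hm : m ≤ p.length) (hxm : G.Adj x (p.getVert m)) : False := by
  rcases Nat.eq_zero_or_pos m with rfl | hm0
  · rw [p.getVert_zero] at hxm
    exact no_ext_start hp hx hxm
  set L := p.length with hL
  have hL1 : 1 ≤ L := by omega
  set l := x :: (ascL p m L ++ ascL p 0 (m-1)) with hldef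
  have hchain : l.Chain' G.Adj := by
    refine List.isChain_cons.2 ⟨?_, ?_⟩
    · intro y hy
      rw [List.head?_append_of_ne_nil _ (ascL_ne_nil p m L), head?_ascL,
        Option.mem_def, Option.some.injEq] at hy
      subst hy; exact hxm
    · refine List.isChain_append.2 ⟨chain'_ascL p le_rfl, chain'_ascL p (by omega), ?_⟩
      refine glue (getLast?_ascL p hm) (head?_ascL p 0 (m-1)) ?_
      rw [hL, p.getVert_length, p.getVert_zero]
      exact hab.symm
  have hnd : l.Nodup := by
    rw [hldef, List.nodup_cons, List.nodup_append']
    refine ⟨?_, nodup_ascL p hp.1 hm le_rfl, nodup_ascL p hp.1 (by omega) (by omega), ?_⟩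
    · rw [List.mem_append]
      rintro (h | h)
      · exact hx (mem_support_of_mem_ascL p hm le_rfl h)
      · exact hx (mem_support_of_mem_ascL p (by omega) (by omega) h)
    · exact disjoint_seg hp.1 (fun y hy => (mem_ascL p hm).1 hy)
        (fun y hy => (mem_ascL p (by omega : 0 ≤ m-1)).1 hy) le_rfl (by omega)
        (Or.inr (by omega))
  have hlen := length_le_of_longest hp l hchain hnd
  rw [hldef, List.length_cons, List.length_append, length_ascL, length_ascL] at hlen
  omega

variable {S : Finset V}

lemma window (hp : IsLongestPath G p) (hS : ∀ y ∈ S, y ∉ p.support)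
    (hcl : ∀ x ∈ S, ∀ y ∈ S, x ≠ y → G.Adj x y) {u : V} (hu : u ∈ S) {m : ℕ}
    (hm : m ≤ p.length) (hadj : G.Adj u (p.getVert m)) :
    S.card ≤ m ∧ m + S.card ≤ p.length := by
  constructor
  · set l := endL S u ++ ascL p m p.length with hldef
    have hchain : l.Chain' G.Adj :=
      List.isChain_append.2 ⟨chain'_endL hcl hu, chain'_ascL p le_rfl,
        glue getLast?_endL (head?_ascL p m p.length) hadj⟩
    have hnd : l.Nodup := by
      rw [hldef, List.nodup_append']
      exact ⟨nodup_endL, nodup_ascL p hp.1 hm le_rfl,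
        disjoint_out hS (fun y hy => (mem_endL hu).1 hy)
          (fun y hy => mem_support_of_mem_ascL p hm le_rfl hy)⟩
    have hlen := length_le_of_longest hp l hchain hnd
    rw [hldef, List.length_append, length_endL hu, length_ascL] at hlen
    omega
  · set l := endL S u ++ descL p m 0 with hldef
    have hchain : l.Chain' G.Adj :=
      List.isChain_append.2 ⟨chain'_endL hcl hu, chain'_descL p hm,
        glue getLast?_endL (head?_descL p) hadj⟩
    have hnd : l.Nodup := by
      rw [hldef, List.nodup_append']
      exact ⟨nodup_endL, nodup_descL p hp.1 hm,
        disjoint_out hS (fun y hy => (mem_endL hu).1 hy)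
          (fun y hy => mem_support_of_mem_descL p (Nat.zero_le m) hm hy)⟩
    have hlen := length_le_of_longest hp l hchain hnd
    rw [hldef, List.length_append, length_endL hu, length_descL] at hlen
    omega

lemma gap (hp : IsLongestPath G p) (hS : ∀ y ∈ S, y ∉ p.support)
    (hcl : ∀ x ∈ S, ∀ y ∈ S, x ≠ y → G.Adj x y) {u u' : V} (hu : u ∈ S) (hu' : u' ∈ S)
    (hne : u ≠ u') {m m' : ℕ} (hmm' : m < m') (hm' : m' ≤ p.length)
    (h1 : G.Adj u (p.getVert m)) (h2 : G.Adj u' (p.getVert m')) :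
    m + S.card + 1 ≤ m' := by
  set l := ascL p 0 m ++ (midL S u u' ++ ascL p m' p.length) with hldef
  have hchain : l.Chain' G.Adj := by
    refine List.isChain_append.2 ⟨chain'_ascL p (by omega), ?_, ?_⟩
    · exact List.isChain_append.2 ⟨chain'_midL hcl hu hu' hne, chain'_ascL p le_rfl,
        glue getLast?_midL (head?_ascL p m' p.length) h2⟩
    · refine glue (getLast?_ascL p (Nat.zero_le m)) ?_ h1.symm
      rw [List.head?_append_of_ne_nil _ midL_ne_nil, head?_midL]
  have hnd : l.Nodup := by
    rw [hldef, List.nodup_append', List.nodup_append']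
    refine ⟨nodup_ascL p hp.1 (Nat.zero_le m) (by omega),
      ⟨nodup_midL hne, nodup_ascL p hp.1 hm' le_rfl,
        (disjoint_out hS (fun y hy => (mem_midL hu hu').1 hy)
          (fun y hy => mem_support_of_mem_ascL p hm' le_rfl hy))⟩, ?_⟩
    · intro y hy hy'
      rw [List.mem_append] at hy'
      rcases hy' with hy' | hy'
      · exact hS y ((mem_midL hu hu').1 hy')
          (mem_support_of_mem_ascL p (Nat.zero_le m) (by omega) hy)
      · exact disjoint_seg hp.1 (fun z hz => (mem_ascL p (Nat.zero_le m)).1 hz)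
          (fun z hz => (mem_ascL p hm').1 hz) (by omega) (by omega)
          (Or.inl (by omega)) hy hy'
  have hlen := length_le_of_longest hp l hchain hnd
  rw [hldef, List.length_append, List.length_append, length_ascL, length_ascL,
    length_midL hu hu' hne] at hlen
  omega

lemma no_base_succ (hp : IsLongestPath G p) (hS : ∀ y ∈ S, y ∉ p.support)
    (hcl : ∀ x ∈ S, ∀ y ∈ S, x ≠ y → G.Adj x y) {u : V} (hu : u ∈ S) {m : ℕ}
    (hm1 : m + 1 ≤ p.length) (h1 : G.Adj u (p.getVert m))
    (h2 : G.Adj a (p.getVert (m+1))) : False := by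
  set l := endL S u ++ (descL p m 0 ++ ascL p (m+1) p.length) with hldef
  have hchain : l.Chain' G.Adj := by
    refine List.isChain_append.2 ⟨chain'_endL hcl hu, ?_, ?_⟩
    · refine List.isChain_append.2 ⟨chain'_descL p (by omega), chain'_ascL p le_rfl, ?_⟩
      refine glue (getLast?_descL p (Nat.zero_le m)) (head?_ascL p (m+1) p.length) ?_
      rw [p.getVert_zero]
      exact h2
    · refine glue getLast?_endL ?_ h1
      rw [List.head?_append_of_ne_nil _ (descL_ne_nil p m 0), head?_descL]
  have hnd : l.Nodup := by
    rw [hldef, List.nodup_append', List.nodup_append']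
    refine ⟨nodup_endL, ⟨nodup_descL p hp.1 (by omega), nodup_ascL p hp.1 (by omega) le_rfl,
      disjoint_seg hp.1 (fun z hz => (mem_descL p (Nat.zero_le m)).1 hz)
        (fun z hz => (mem_ascL p hm1).1 hz) (by omega) (by omega) (Or.inl (by omega))⟩, ?_⟩
    · intro y hy hy'
      rw [List.mem_append] at hy'
      have hyS : y ∈ S := (mem_endL hu).1 hy
      rcases hy' with hy' | hy'
      · exact hS y hyS (mem_support_of_mem_descL p (Nat.zero_le m) (by omega) hy')
      · exact hS y hyS (mem_support_of_mem_ascL p hm1 le_rfl hy')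
  have hlen := length_le_of_longest hp l hchain hnd
  rw [hldef, List.length_append, List.length_append, length_endL hu, length_descL,
    length_ascL] at hlen
  have hcard : 1 ≤ S.card := Finset.card_pos.2 ⟨u, hu⟩
  omega

lemma no_cross (hp : IsLongestPath G p) {u : V} (hu : u ∉ p.support) {m m' : ℕ}
    (hmm' : m < m') (hm'1 : m' + 1 ≤ p.length) (h1 : G.Adj u (p.getVert m))
    (h2 : G.Adj u (p.getVert m')) (h3 : G.Adj (p.getVert (m+1)) (p.getVert (m'+1))) :
    False := by
  set l := ascL p 0 m ++ ([u] ++ (descL p m' (m+1) ++ ascL p (m'+1) p.length)) with hldef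
  have hchain : l.Chain' G.Adj := by
    refine List.isChain_append.2 ⟨chain'_ascL p (by omega), ?_, ?_⟩
    · refine List.isChain_append.2 ⟨List.isChain_singleton u, ?_, ?_⟩
      · refine List.isChain_append.2 ⟨chain'_descL p (by omega), chain'_ascL p le_rfl, ?_⟩
        exact glue (getLast?_descL p (by omega)) (head?_ascL p (m'+1) p.length) h3
      · refine glue (by rfl) ?_ h2
        rw [List.head?_append_of_ne_nil _ (descL_ne_nil p m' (m+1)), head?_descL]
    · refine glue (getLast?_ascL p (Nat.zero_le m)) (by rfl) h1.symm
  have hnd : l.Nodup := by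
    rw [hldef, List.nodup_append', List.nodup_append', List.nodup_append']
    refine ⟨nodup_ascL p hp.1 (Nat.zero_le m) (by omega),
      ⟨List.nodup_singleton u,
        ⟨nodup_descL p hp.1 (by omega), nodup_ascL p hp.1 (by omega) le_rfl,
          disjoint_seg hp.1 (fun z hz => (mem_descL p (by omega : m+1 ≤ m')).1 hz)
            (fun z hz => (mem_ascL p hm'1).1 hz) (by omega) (by omega)
            (Or.inl (by omega))⟩, ?_⟩, ?_⟩
    · intro y hy hy'
      rw [List.mem_singleton] at hy
      subst hy
      rw [List.mem_append] at hy'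
      rcases hy' with hy' | hy'
      · exact hu (mem_support_of_mem_descL p (by omega) (by omega) hy')
      · exact hu (mem_support_of_mem_ascL p (by omega) le_rfl hy')
    · intro y hy hy'
      have hys : y ∈ p.support := mem_support_of_mem_ascL p (Nat.zero_le m) (by omega) hy
      rw [List.mem_append] at hy'
      rcases hy' with hy' | hy'
      · rw [List.mem_singleton] at hy'
        subst hy'
        exact hu hys
      · rw [List.mem_append] at hy'
        rcases hy' with hy' | hy'
        · exact disjoint_seg hp.1 (fun z hz => (mem_ascL p (Nat.zero_le m)).1 hz)
            (fun z hz => (mem_descL p (by omega : m+1 ≤ m')).1 hz) (by omega) (by omega)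
            (Or.inl (by omega)) hy hy'
        · exact disjoint_seg hp.1 (fun z hz => (mem_ascL p (Nat.zero_le m)).1 hz)
            (fun z hz => (mem_ascL p (by omega : m'+1 ≤ p.length)).1 hz) (by omega)
            (by omega) (Or.inl (by omega)) hy hy'
  have hlen := length_le_of_longest hp l hchain hnd
  rw [hldef, List.length_append, List.length_append, List.length_append, length_ascL,
    length_descL, length_ascL, List.length_singleton] at hlen
  omega

lemma no_insert (hp : IsLongestPath G p) {u : V} (hu : u ∉ p.support) {m : ℕ}
    (hm1 : m + 1 ≤ p.length) (h1 : G.Adj u (p.getVert m)) (h2 : G.Adj u (p.getVert (m+1))) :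
    False := by
  set l := ascL p 0 m ++ ([u] ++ ascL p (m+1) p.length) with hldef
  have hchain : l.Chain' G.Adj := by
    refine List.isChain_append.2 ⟨chain'_ascL p (by omega), ?_, ?_⟩
    · refine List.isChain_append.2 ⟨List.isChain_singleton u, chain'_ascL p le_rfl, ?_⟩
      exact glue (by rfl) (head?_ascL p (m+1) p.length) h2
    · exact glue (getLast?_ascL p (Nat.zero_le m)) (by rfl) h1.symm
  have hnd : l.Nodup := by
    rw [hldef, List.nodup_append', List.nodup_append']
    refine ⟨nodup_ascL p hp.1 (Nat.zero_le m) (by omega),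
      ⟨List.nodup_singleton u, nodup_ascL p hp.1 (by omega) le_rfl, ?_⟩, ?_⟩
    · intro y hy hy'
      rw [List.mem_singleton] at hy
      subst hy
      exact hu (mem_support_of_mem_ascL p (by omega) le_rfl hy')
    · intro y hy hy'
      have hys : y ∈ p.support := mem_support_of_mem_ascL p (Nat.zero_le m) (by omega) hy
      rw [List.mem_append] at hy'
      rcases hy' with hy' | hy'
      · rw [List.mem_singleton] at hy'
        subst hy'
        exact hu hys
      · exact disjoint_seg hp.1 (fun z hz => (mem_ascL p (Nat.zero_le m)).1 hz)
          (fun z hz => (mem_ascL p (by omega : m+1 ≤ p.length)).1 hz) (by omega)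
          (by omega) (Or.inl (by omega)) hy hy'
  have hlen := length_le_of_longest hp l hchain hnd
  rw [hldef, List.length_append, List.length_append, length_ascL, length_ascL,
    List.length_singleton] at hlen
  omega

lemma final_ineq (hp : IsLongestPath G p) (hS : ∀ y ∈ S, y ∉ p.support)
    (hcl : ∀ x ∈ S, ∀ y ∈ S, x ≠ y → G.Adj x y) {w : V} (hw : w ∈ S) {i j m : ℕ}
    (hji : j ≤ i) (him : i < m) (hm : m ≤ p.length)
    (h1 : G.Adj w (p.getVert i)) (h2 : G.Adj (p.getVert m) (p.getVert j)) :
    i + S.card + 1 ≤ m + j := by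
  set l := descL p p.length m ++ (ascL p j i ++ startL S w) with hldef
  have hchain : l.Chain' G.Adj := by
    refine List.isChain_append.2 ⟨chain'_descL p le_rfl, ?_, ?_⟩
    · refine List.isChain_append.2 ⟨chain'_ascL p (by omega), chain'_startL hcl hw, ?_⟩
      exact glue (getLast?_ascL p hji) head?_startL h1.symm
    · refine glue (getLast?_descL p hm) ?_ h2
      rw [List.head?_append_of_ne_nil _ (ascL_ne_nil p j i), head?_ascL]
  have hnd : l.Nodup := by
    rw [hldef, List.nodup_append', List.nodup_append']
    refine ⟨nodup_descL p hp.1 le_rfl,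
      ⟨nodup_ascL p hp.1 hji (by omega), nodup_startL, ?_⟩, ?_⟩
    · intro y hy hy'
      exact hS y ((mem_startL hw).1 hy')
        (mem_support_of_mem_ascL p hji (by omega) hy)
    · intro y hy hy'
      have hys : y ∈ p.support := mem_support_of_mem_descL p hm le_rfl hy
      rw [List.mem_append] at hy'
      rcases hy' with hy' | hy'
      · exact disjoint_seg hp.1 (fun z hz => (mem_descL p hm).1 hz)
          (fun z hz => (mem_ascL p hji).1 hz) (by omega) (by omega)
          (Or.inr (by omega)) hy hy'
      · exact hS y ((mem_startL hw).1 hy') hys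
  have hlen := length_le_of_longest hp l hchain hnd
  rw [hldef, List.length_append, List.length_append, length_descL, length_ascL,
    length_startL hw] at hlen
  omega

end Cons

lemma indep4 (hα : ∀ s : Finset V, (∀ a ∈ s, ∀ b ∈ s, a ≠ b → ¬ G.Adj a b) → s.card ≤ 3)
    {x1 x2 x3 x4 : V} (d12 : x1 ≠ x2) (d13 : x1 ≠ x3) (d14 : x1 ≠ x4) (d23 : x2 ≠ x3)
    (d24 : x2 ≠ x4) (d34 : x3 ≠ x4) (n12 : ¬ G.Adj x1 x2) (n13 : ¬ G.Adj x1 x3)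
    (n14 : ¬ G.Adj x1 x4) (n23 : ¬ G.Adj x2 x3) (n24 : ¬ G.Adj x2 x4)
    (n34 : ¬ G.Adj x3 x4) : False := by
  classical
  have hcard : ({x1, x2, x3, x4} : Finset V).card = 4 := by
    rw [Finset.card_insert_of_notMem (by simp [d12, d13, d14]),
      Finset.card_insert_of_notMem (by simp [d23, d24]),
      Finset.card_insert_of_notMem (by simp [d34])]
    rfl
  have h := hα {x1, x2, x3, x4} ?_
  · omega
  · intro c hc d hd hcd
    simp only [Finset.mem_insert, Finset.mem_singleton] at hc hd
    rcases hc with rfl | rfl | rfl | rfl <;> rcases hd with rfl | rfl | rfl | rfl <;>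
      first
        | exact absurd rfl hcd
        | assumption
        | exact fun h => n12 h.symm
        | exact fun h => n13 h.symm
        | exact fun h => n14 h.symm
        | exact fun h => n23 h.symm
        | exact fun h => n24 h.symm
        | exact fun h => n34 h.symm

theorem main
    {V : Type} [Fintype V] (G : SimpleGraph V) [DecidableRel G.Adj]
    (hconn : G.Connected)
    (hα : ∀ s : Finset V, (∀ a ∈ s, ∀ b ∈ s, a ≠ b → ¬ G.Adj a b) → s.card ≤ 3)
    (v : V) (hv : G.maxDegree - 1 ≤ G.degree v)
    {a b : V} (p : G.Walk a b) (hp : IsLongestPath G p) :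
    v ∈ p.support := by
  classical
  by_contra hvs
  have hpath : p.IsPath := hp.1
  have hasup : a ∈ p.support := p.start_mem_support
  have hbsup : b ∈ p.support := p.end_mem_support
  -- the set of vertices missed by `p`
  set S : Finset V := Finset.univ.filter (fun x => x ∉ p.support) with hSdef
  have hS : ∀ y ∈ S, y ∉ p.support := by
    intro y hy; rw [hSdef, Finset.mem_filter] at hy; exact hy.2
  have hmemS : ∀ y, y ∉ p.support → y ∈ S := by
    intro y hy; rw [hSdef, Finset.mem_filter]; exact ⟨Finset.mem_univ y, hy⟩
  have hvS : v ∈ S := hmemS v hvs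
  have hcard1 : 1 ≤ S.card := Finset.card_pos.2 ⟨v, hvS⟩
  -- length at least 1
  have hL1 : 1 ≤ p.length := by
    by_contra hL
    obtain ⟨w0⟩ := hconn.preconnected v a
    cases w0 with
    | nil => exact hvs hasup
    | @cons _ x _ hadj q =>
      have hc : ([v, x] : List V).Chain' G.Adj := by
        simp [List.Chain', List.isChain_cons_cons, hadj]
      have hnd : ([v, x] : List V).Nodup := by
        simp [G.ne_of_adj hadj]
      have := length_le_of_longest hp _ hc hnd
      simp only [List.length_cons, List.length_singleton] at this
      omega
  have hne_ab : a ≠ b := by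
    intro h
    have h0 : p.getVert 0 = a := p.getVert_zero
    have hL : p.getVert p.length = b := p.getVert_length
    have := getVert_inj hpath (Nat.zero_le p.length) le_rfl (by rw [h0, hL, h])
    omega
  -- non-adjacency to endpoints
  have hnadj_a : ∀ x, x ∉ p.support → ¬ G.Adj x a := fun x hx hadj => no_ext_start hp hx hadj
  have hnadj_b : ∀ x, x ∉ p.support → ¬ G.Adj x b := fun x hx hadj => no_ext_end hp hx hadj
  -- endpoints not adjacent
  have hab : ¬ G.Adj a b := by
    intro hab
    obtain ⟨w0⟩ := hconn.preconnected v a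
    obtain ⟨x, z, hx, hz, hadj⟩ := crossing w0 (· ∈ p.support) hvs hasup
    obtain ⟨m, hm, hmL⟩ := Walk.mem_support_iff_exists_getVert.1 hz
    exact no_loop hp hab hx hmL (hm ▸ hadj)
  have hne_sup : ∀ x, x ∉ p.support → ∀ z, z ∈ p.support → x ≠ z :=
    fun x hx z hz h => absurd (h ▸ hz) hx
  have hgv_sup : ∀ m, m ≤ p.length → p.getVert m ∈ p.support :=
    fun m hm => Walk.mem_support_iff_exists_getVert.2 ⟨m, rfl, hm⟩
  -- S is a clique
  have hclique : ∀ x ∈ S, ∀ y ∈ S, x ≠ y → G.Adj x y := by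
    intro x hx y hy hxy
    by_contra hnadj
    have hxps := hS x hx
    have hyps := hS y hy
    exact indep4 hα hne_ab (hne_sup x hxps a hasup).symm (hne_sup y hyps a hasup).symm
      (hne_sup x hxps b hbsup).symm (hne_sup y hyps b hbsup).symm hxy
      hab (fun h => hnadj_a x hxps h.symm) (fun h => hnadj_a y hyps h.symm)
      (fun h => hnadj_b x hxps h.symm) (fun h => hnadj_b y hyps h.symm) hnadj
  -- each vertex outside `p` has at most one neighbour on `p`
  have huniq : ∀ u ∈ S, ∀ m ≤ p.length, ∀ m' ≤ p.length,
      G.Adj u (p.getVert m) → G.Adj u (p.getVert m') → m = m' := by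
    have key : ∀ u ∈ S, ∀ m m', m < m' → m' ≤ p.length →
        G.Adj u (p.getVert m) → G.Adj u (p.getVert m') → False := by
      intro u hu m m' hmm' hm'L h1 h2
      have hups := hS u hu
      obtain ⟨hw1, hw2⟩ := window hp hS hclique hu (by omega) h1
      obtain ⟨hw1', hw2'⟩ := window hp hS hclique hu hm'L h2
      -- m' ≥ m + 2
      have hm2 : m + 2 ≤ m' := by
        by_contra h
        have : m' = m + 1 := by omega
        subst this
        exact no_insert hp hups (by omega) h1 h2
      have hm'1L : m' + 1 ≤ p.length := by omega
      have hm1L : m + 1 ≤ p.length := by omega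
      -- a is not adjacent to successors of attachments
      have h7a : ¬ G.Adj a (p.getVert (m+1)) := fun h =>
        no_base_succ hp hS hclique hu hm1L h1 h
      have h7a' : ¬ G.Adj a (p.getVert (m'+1)) := fun h =>
        no_base_succ hp hS hclique hu hm'1L h2 h
      have h7b : ¬ G.Adj (p.getVert (m+1)) (p.getVert (m'+1)) := fun h =>
        no_cross hp hups hmm' hm'1L h1 h2 h
      have h7c : ¬ G.Adj u (p.getVert (m+1)) := fun h =>
        no_insert hp hups hm1L h1 h
      have h7c' : ¬ G.Adj u (p.getVert (m'+1)) := fun h =>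
        no_insert hp hups hm'1L h2 h
      -- indices 0, m+1, m'+1 are distinct and ≤ length
      have hinj : ∀ s t : ℕ, s ≤ p.length → t ≤ p.length → s ≠ t →
          p.getVert s ≠ p.getVert t := by
        intro s t hs ht hst h
        exact hst (getVert_inj hpath hs ht h)
      have hm1 : 1 ≤ m := by omega
      have ha0 : a = p.getVert 0 := p.getVert_zero.symm
      refine indep4 hα (x1 := a) (x2 := p.getVert (m+1)) (x3 := p.getVert (m'+1)) (x4 := u)
        ?_ ?_ ?_ ?_ ?_ ?_ h7a h7a' (fun h => hnadj_a u hups h.symm) h7b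
        (fun h => h7c h.symm) (fun h => h7c' h.symm)
      · have h := hinj 0 (m+1) (by omega) (by omega) (by omega)
        rwa [p.getVert_zero] at h
      · have h := hinj 0 (m'+1) (by omega) (by omega) (by omega)
        rwa [p.getVert_zero] at h
      · exact (hne_sup u hups a hasup).symm
      · exact hinj (m+1) (m'+1) (by omega) (by omega) (by omega)
      · exact (hne_sup u hups _ (hgv_sup (m+1) (by omega))).symm
      · exact (hne_sup u hups _ (hgv_sup (m'+1) (by omega))).symm
    intro u hu m hm m' hm' h1 h2
    rcases Nat.lt_trichotomy m m' with h | h | h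
    · exact absurd (key u hu m m' h hm' h1 h2) not_false
    · exact h
    · exact absurd (key u hu m' m h hm h2 h1) not_false
  -- degree bound for v, hence max degree bound
  have hdegv : G.degree v ≤ S.card := by
    by_cases hA : ∃ m ≤ p.length, G.Adj v (p.getVert m)
    · obtain ⟨m₀, hm₀, hadj₀⟩ := hA
      have hsub : G.neighborFinset v ⊆ insert (p.getVert m₀) (S.erase v) := by
        intro x hx
        rw [SimpleGraph.mem_neighborFinset] at hx
        by_cases hxs : x ∈ p.support
        · obtain ⟨k, hk, hkL⟩ := Walk.mem_support_iff_exists_getVert.1 hxs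
          have : k = m₀ := huniq v hvS k hkL m₀ hm₀ (hk ▸ hx) hadj₀
          subst this
          exact Finset.mem_insert.2 (Or.inl hk.symm)
        · exact Finset.mem_insert.2 (Or.inr (Finset.mem_erase.2
            ⟨(G.ne_of_adj hx).symm, hmemS x hxs⟩))
      calc G.degree v = (G.neighborFinset v).card := rfl
        _ ≤ (insert (p.getVert m₀) (S.erase v)).card := Finset.card_le_card hsub
        _ ≤ (S.erase v).card + 1 := Finset.card_insert_le _ _
        _ ≤ S.card := by rw [Finset.card_erase_of_mem hvS]; omega
    · push_neg at hA
      have hsub : G.neighborFinset v ⊆ S.erase v := by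
        intro x hx
        rw [SimpleGraph.mem_neighborFinset] at hx
        by_cases hxs : x ∈ p.support
        · obtain ⟨k, hk, hkL⟩ := Walk.mem_support_iff_exists_getVert.1 hxs
          exact absurd (hk ▸ hx) (hA k hkL)
        · exact Finset.mem_erase.2 ⟨(G.ne_of_adj hx).symm, hmemS x hxs⟩
      calc G.degree v = (G.neighborFinset v).card := rfl
        _ ≤ (S.erase v).card := Finset.card_le_card hsub
        _ ≤ S.card := by rw [Finset.card_erase_of_mem hvS]; omega
  have hmax : G.maxDegree ≤ S.card + 1 := by
    have := hdegv
    omega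
  -- an attachment exists
  obtain ⟨w0⟩ := hconn.preconnected v a
  obtain ⟨w, z, hwps, hzs, hadjwz⟩ := crossing w0 (· ∈ p.support) hvs hasup
  obtain ⟨i, hgvi, hiL⟩ := Walk.mem_support_iff_exists_getVert.1 hzs
  have hwS : w ∈ S := hmemS w hwps
  have hwadj : G.Adj w (p.getVert i) := hgvi ▸ hadjwz
  obtain ⟨hwin1, hwin2⟩ := window hp hS hclique hwS hiL hwadj
  -- neighbours of p_i along the path
  have hiL' : i < p.length := by omega
  have hi1 : 1 ≤ i := by omega
  have hadj_succ : G.Adj (p.getVert i) (p.getVert (i+1)) := p.adj_getVert_succ hiL'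
  have hadj_pred : G.Adj (p.getVert i) (p.getVert (i-1)) := by
    have h := p.adj_getVert_succ (i := i-1) (by omega)
    have he : i - 1 + 1 = i := by omega
    rw [he] at h
    exact h.symm
  have hdegi : G.degree (p.getVert i) ≤ S.card + 1 :=
    (G.degree_le_maxDegree _).trans hmax
  -- case |S| = 1
  rcases eq_or_lt_of_le hcard1 with hcard_eq | hcard2
  · have htrip : ({p.getVert (i-1), p.getVert (i+1), w} : Finset V) ⊆
        G.neighborFinset (p.getVert i) := by
      intro y hy
      rw [SimpleGraph.mem_neighborFinset]
      simp only [Finset.mem_insert, Finset.mem_singleton] at hy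
      rcases hy with rfl | rfl | rfl
      · exact hadj_pred
      · exact hadj_succ
      · exact hwadj.symm
    have hc3 : ({p.getVert (i-1), p.getVert (i+1), w} : Finset V).card = 3 := by
      rw [Finset.card_insert_of_notMem, Finset.card_insert_of_notMem, Finset.card_singleton]
      · simp only [Finset.mem_singleton]
        exact (hne_sup w hwps _ (hgv_sup (i+1) (by omega))).symm
      · simp only [Finset.mem_insert, Finset.mem_singleton]
        push_neg
        constructor
        · intro h
          have := getVert_inj hpath (i := i-1) (j := i+1) (by omega) (by omega) h
          omega
        · exact (hne_sup w hwps _ (hgv_sup (i-1) (by omega))).symm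
    have h3 : 3 ≤ G.degree (p.getVert i) := by
      calc (3 : ℕ) = ({p.getVert (i-1), p.getVert (i+1), w} : Finset V).card := hc3.symm
        _ ≤ (G.neighborFinset (p.getVert i)).card := Finset.card_le_card htrip
        _ = G.degree (p.getVert i) := rfl
    omega
  -- main case : |S| ≥ 2
  -- D : indices of path-neighbours of p_i
  set D : Finset ℕ := (Finset.range (p.length + 1)).filter
      (fun t => G.Adj (p.getVert i) (p.getVert t)) with hDdef
  have hmemD : ∀ t, t ∈ D ↔ t ≤ p.length ∧ G.Adj (p.getVert i) (p.getVert t) := by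
    intro t
    rw [hDdef, Finset.mem_filter, Finset.mem_range]
    exact ⟨fun ⟨h1, h2⟩ => ⟨by omega, h2⟩, fun ⟨h1, h2⟩ => ⟨by omega, h2⟩⟩
  have hDcard : D.card + 1 ≤ S.card + 1 := by
    have himg : insert w (D.image (p.getVert ·)) ⊆ G.neighborFinset (p.getVert i) := by
      intro y hy
      rw [SimpleGraph.mem_neighborFinset]
      rcases Finset.mem_insert.1 hy with rfl | hy'
      · exact hwadj.symm
      · obtain ⟨t, ht, rfl⟩ := Finset.mem_image.1 hy'
        exact ((hmemD t).1 ht).2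
    have hinj : Set.InjOn (p.getVert ·) D := by
      intro s hs t ht hst
      exact getVert_inj hpath ((hmemD s).1 hs).1 ((hmemD t).1 ht).1 hst
    have hwnot : w ∉ D.image (p.getVert ·) := by
      intro h
      obtain ⟨t, ht, hteq⟩ := Finset.mem_image.1 h
      exact hwps (hteq ▸ hgv_sup t ((hmemD t).1 ht).1)
    have := Finset.card_le_card himg
    rw [Finset.card_insert_of_notMem hwnot, Finset.card_image_of_injOn hinj] at this
    have hd : (G.neighborFinset (p.getVert i)).card = G.degree (p.getVert i) := rfl
    omega
  have hDS : D.card ≤ S.card := by omega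
  have hpredD : i - 1 ∈ D := (hmemD _).2 ⟨by omega, hadj_pred⟩
  have hsuccD : i + 1 ∈ D := (hmemD _).2 ⟨by omega, hadj_succ⟩
  -- split D around i
  set el : ℕ := (D.filter (fun t => t < i - 1)).card with heldef
  set er : ℕ := (D.filter (fun t => i + 1 < t)).card with herdef
  have hsplit : el + er + 2 ≤ S.card := by
    have hdisj : Disjoint (D.filter (fun t => t < i - 1)) (D.filter (fun t => i + 1 < t)) := by
      rw [Finset.disjoint_left]
      intro t ht ht'
      rw [Finset.mem_filter] at ht ht'
      omega
    have hsub : (D.filter (fun t => t < i - 1)) ∪ (D.filter (fun t => i + 1 < t)) ⊆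
        (D.erase (i-1)).erase (i+1) := by
      intro t ht
      rcases Finset.mem_union.1 ht with ht' | ht' <;> rw [Finset.mem_filter] at ht' <;>
        exact Finset.mem_erase.2 ⟨by omega, Finset.mem_erase.2 ⟨by omega, ht'.1⟩⟩
    have h1 := Finset.card_le_card hsub
    rw [Finset.card_union_of_disjoint hdisj] at h1
    have hmem1 : (i+1) ∈ D.erase (i-1) := Finset.mem_erase.2 ⟨by omega, hsuccD⟩
    have h2 : ((D.erase (i-1)).erase (i+1)).card = D.card - 2 := by
      rw [Finset.card_erase_of_mem hmem1, Finset.card_erase_of_mem hpredD]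
      omega
    have hD2 : 2 ≤ D.card := by
      have : ({i-1, i+1} : Finset ℕ) ⊆ D := by
        intro t ht
        rcases Finset.mem_insert.1 ht with rfl | ht'
        · exact hpredD
        · rw [Finset.mem_singleton] at ht'; subst ht'; exact hsuccD
      have hc2 : ({i-1, i+1} : Finset ℕ).card = 2 := by
        rw [Finset.card_insert_of_notMem (by simp only [Finset.mem_singleton]; omega),
          Finset.card_singleton]
      have := Finset.card_le_card this
      omega
    omega
  -- pigeonhole on the left
  have hexj : ∃ j, j ≤ el ∧ j ∉ D := by
    by_contra h
    push_neg at h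
    have hsub : Finset.range (el + 1) ⊆ D.filter (fun t => t < i - 1) := by
      intro t ht
      rw [Finset.mem_range] at ht
      rw [Finset.mem_filter]
      refine ⟨h t (by omega), by omega⟩
    have := Finset.card_le_card hsub
    rw [Finset.card_range] at this
    omega
  obtain ⟨j, hjel, hjD⟩ := hexj
  -- pigeonhole on the right
  have hexm : ∃ t, t ≤ er ∧ (i + 2 + t) ∉ D := by
    by_contra h
    push_neg at h
    have hsub : (Finset.range (er + 1)).image (fun t => i + 2 + t) ⊆
        D.filter (fun t => i + 1 < t) := by
      intro t ht
      obtain ⟨t', ht', rfl⟩ := Finset.mem_image.1 ht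
      rw [Finset.mem_range] at ht'
      rw [Finset.mem_filter]
      exact ⟨h t' (by omega), by omega⟩
    have hinj : Set.InjOn (fun t => i + 2 + t) (Finset.range (er + 1)) := by
      intro s hs t ht hst
      simpa using hst
    have := Finset.card_le_card hsub
    rw [Finset.card_image_of_injOn hinj, Finset.card_range] at this
    omega
  obtain ⟨tm, htm, htmD⟩ := hexm
  set m : ℕ := i + 2 + tm with hmdef
  have hmL : m ≤ p.length := by omega
  have hjnadj : ¬ G.Adj (p.getVert i) (p.getVert j) := by
    intro h
    exact hjD ((hmemD j).2 ⟨by omega, h⟩)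
  have hmnadj : ¬ G.Adj (p.getVert i) (p.getVert m) := by
    intro h
    exact htmD ((hmemD m).2 ⟨hmL, h⟩)
  -- a vertex u ∈ S not adjacent to p_i
  have hexu : ∃ u ∈ S, ¬ G.Adj (p.getVert i) u := by
    by_contra h
    push_neg at h
    have hsub : S ∪ {p.getVert (i-1), p.getVert (i+1)} ⊆ G.neighborFinset (p.getVert i) := by
      intro y hy
      rw [SimpleGraph.mem_neighborFinset]
      rcases Finset.mem_union.1 hy with hy' | hy'
      · exact h y hy'
      · rcases Finset.mem_insert.1 hy' with rfl | hy''
        · exact hadj_pred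
        · rw [Finset.mem_singleton] at hy''; subst hy''; exact hadj_succ
    have hdisj : Disjoint S ({p.getVert (i-1), p.getVert (i+1)} : Finset V) := by
      rw [Finset.disjoint_left]
      intro y hy hy'
      rcases Finset.mem_insert.1 hy' with rfl | hy''
      · exact (hS _ hy) (hgv_sup (i-1) (by omega))
      · rw [Finset.mem_singleton] at hy''; subst hy''
        exact (hS _ hy) (hgv_sup (i+1) (by omega))
    have hc2 : ({p.getVert (i-1), p.getVert (i+1)} : Finset V).card = 2 := by
      rw [Finset.card_insert_of_notMem, Finset.card_singleton]
      simp only [Finset.mem_singleton]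
      intro h'
      have := getVert_inj hpath (i := i-1) (j := i+1) (by omega) (by omega) h'
      omega
    have := Finset.card_le_card hsub
    rw [Finset.card_union_of_disjoint hdisj, hc2] at this
    have hd : (G.neighborFinset (p.getVert i)).card = G.degree (p.getVert i) := rfl
    omega
  obtain ⟨u, huS, hunadj⟩ := hexu
  have hups := hS u huS
  have huw : u ≠ w := by
    rintro rfl
    exact hunadj hwadj.symm
  -- u is not adjacent to p_j
  have hujnadj : ¬ G.Adj u (p.getVert j) := by
    intro h
    obtain ⟨hw1, _⟩ := window hp hS hclique huS (by omega) h
    omega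
  -- u is not adjacent to p_m
  have humnadj : ¬ G.Adj u (p.getVert m) := by
    intro h
    have := gap hp hS hclique hwS huS (by exact fun hh => huw hh.symm) (by omega : i < m) hmL
      hwadj h
    omega
  -- the forced chord
  have hjm : G.Adj (p.getVert j) (p.getVert m) := by
    by_contra hno
    have hinj : ∀ s t : ℕ, s ≤ p.length → t ≤ p.length → s ≠ t →
        p.getVert s ≠ p.getVert t := by
      intro s t hs ht hst h
      exact hst (getVert_inj hpath hs ht h)
    exact indep4 hα (x1 := p.getVert j) (x2 := p.getVert m) (x3 := p.getVert i) (x4 := u)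
      (hinj j m (by omega) (by omega) (by omega))
      (hinj j i (by omega) (by omega) (by omega))
      (hne_sup u hups _ (hgv_sup j (by omega))).symm
      (hinj m i (by omega) (by omega) (by omega))
      (hne_sup u hups _ (hgv_sup m (by omega))).symm
      (hne_sup u hups _ (hgv_sup i (by omega))).symm
      hno (fun h => hjnadj h.symm) (fun h => hujnadj h.symm)
      (fun h => hmnadj h.symm) (fun h => humnadj h.symm)
      (fun h => hunadj h)
  -- final contradiction
  have := final_ineq hp hS hclique hwS (by omega : j ≤ i) (by omega : i < m) hmL
    hwadj hjm.symm
  omega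


end LP

/-- If `G` is connected with independence number at most `3`, then every longest
path of `G` contains every vertex of degree at least `Δ(G) - 1`. -/
theorem longest_path_contains_near_max_degree_of_alpha_le_three
    {V : Type} [Fintype V] (G : SimpleGraph V) [DecidableRel G.Adj]
    (hconn : G.Connected)
    (hα : ∀ s : Finset V, (∀ a ∈ s, ∀ b ∈ s, a ≠ b → ¬ G.Adj a b) → s.card ≤ 3)
    (v : V) (hv : G.maxDegree - 1 ≤ G.degree v)
    {a b : V} (p : G.Walk a b) (hp : IsLongestPath G p) :
    v ∈ p.support :=
  LP.main G hconn hα v hv p hp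
end

section
/- If G is a connected finite simple graph with independence number α(G) ≤ 3 and Δ(G) − δ(G) ≤ 1, then G has a spanning path (a Hamiltonian path). -/
open SimpleGraph

set_option linter.unusedSectionVars false
set_option maxHeartbeats 1000000

open List

section Aux

variable {V : Type} [Fintype V] [DecidableEq V] (G : SimpleGraph V) [DecidableRel G.Adj]

private lemma exists_walk_of_chain (l : List V) (hne : l ≠ []) (hc : l.Chain' G.Adj) :
    ∃ (a b : V) (w : G.Walk a b), w.support = l := by
  induction l with
  | nil => exact absurd rfl hne
  | cons a t ih =>
    cases t with
    | nil => exact ⟨a, a, Walk.nil, rfl⟩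
    | cons b t' =>
      obtain ⟨a', b', w, hw⟩ := ih (by simp) hc.tail
      have h2 := w.support_eq_cons
      rw [hw] at h2
      injection h2 with h3 _
      subst h3
      have hadj : G.Adj a b := (List.isChain_cons_cons.mp hc).1
      exact ⟨a, b', Walk.cons hadj w, by simp [hw]⟩

private lemma exists_max_chain :
    ∃ xs : List V, xs.Chain' G.Adj ∧ xs.Nodup ∧
      ∀ ys : List V, ys.Chain' G.Adj → ys.Nodup → ys.length ≤ xs.length := by
  by_contra h
  push_neg at h
  have key : ∀ m : ℕ, ∃ xs : List V, xs.Chain' G.Adj ∧ xs.Nodup ∧ m ≤ xs.length := by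
    intro m
    induction m with
    | zero => exact ⟨[], List.isChain_nil, List.nodup_nil, Nat.zero_le _⟩
    | succ m ih =>
      obtain ⟨xs, h1, h2, h3⟩ := ih
      obtain ⟨ys, g1, g2, g3⟩ := h xs h1 h2
      exact ⟨ys, g1, g2, by omega⟩
  obtain ⟨xs, _, h2, h3⟩ := key (Fintype.card V + 1)
  have := h2.length_le_card
  omega

private lemma exists_clique_list :
    ∀ (n : ℕ) (s : Finset V), s.card = n →
      (∀ a ∈ s, ∀ b ∈ s, a ≠ b → G.Adj a b) → ∀ z ∈ s,
      ∃ l : List V, l.Chain' G.Adj ∧ l.Nodup ∧ (∀ x, x ∈ l ↔ x ∈ s) ∧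
        l.getLast? = some z ∧ l.length = n := by
  intro n
  induction n with
  | zero =>
    intro s hcard _ z hz
    rw [Finset.card_eq_zero] at hcard
    subst hcard
    simp at hz
  | succ n ih =>
    intro s hcard hadj z hz
    rcases Nat.eq_zero_or_pos n with hn | hn
    · subst hn
      obtain ⟨a, rfl⟩ := Finset.card_eq_one.mp hcard
      obtain rfl : z = a := Finset.mem_singleton.mp hz
      exact ⟨[z], List.isChain_singleton z, by simp, fun x => by simp, by simp, by simp⟩
    · have hcard' : (s.erase z).card = n := by
        rw [Finset.card_erase_of_mem hz, hcard]
        omega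
      have hne : (s.erase z).Nonempty := by
        rw [← Finset.card_pos, hcard']; omega
      obtain ⟨z', hz'⟩ := hne
      obtain ⟨l, c1, c2, c3, c4, c5⟩ := ih (s.erase z) hcard'
        (fun a ha b hb hab => hadj a (Finset.mem_of_mem_erase ha) b (Finset.mem_of_mem_erase hb) hab)
        z' hz'
      refine ⟨l ++ [z], ?_, ?_, ?_, List.getLast?_concat, by simp [c5]⟩
      · refine List.isChain_append.mpr ⟨c1, List.isChain_singleton _, ?_⟩
        intro x hx u hu
        rw [c4] at hx
        simp only [Option.mem_some_iff] at hx
        simp only [List.head?_cons, Option.mem_some_iff] at hu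
        subst hx; subst hu
        exact hadj z' (Finset.mem_of_mem_erase hz') z hz (Finset.ne_of_mem_erase hz')
      · rw [List.nodup_append']
        refine ⟨c2, List.nodup_singleton _, ?_⟩
        intro x hx hx2
        rw [List.mem_singleton] at hx2
        subst hx2
        exact (Finset.notMem_erase x s) ((c3 x).mp hx)
      · intro x
        rw [List.mem_append, c3 x, List.mem_singleton, Finset.mem_erase]
        constructor
        · rintro (⟨_, hx⟩ | rfl)
          · exact hx
          · exact hz
        · intro hx
          by_cases hxz : x = z
          · exact Or.inr hxz
          · exact Or.inl ⟨hxz, hx⟩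

private lemma no_indep4
    (hα : ∀ s : Finset V, (∀ a ∈ s, ∀ b ∈ s, a ≠ b → ¬ G.Adj a b) → s.card ≤ 3)
    {a b c d : V}
    (dab : a ≠ b) (dac : a ≠ c) (dad : a ≠ d) (dbc : b ≠ c) (dbd : b ≠ d) (dcd : c ≠ d)
    (nab : ¬G.Adj a b) (nac : ¬G.Adj a c) (nad : ¬G.Adj a d)
    (nbc : ¬G.Adj b c) (nbd : ¬G.Adj b d) (ncd : ¬G.Adj c d) : False := by
  have hcard : ({a, b, c, d} : Finset V).card = 4 := by
    rw [Finset.card_insert_of_notMem (by simp [dab, dac, dad]),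
      Finset.card_insert_of_notMem (by simp [dbc, dbd]),
      Finset.card_insert_of_notMem (by simp [dcd]), Finset.card_singleton]
  have h4 := hα {a, b, c, d} ?_
  · omega
  · intro x hx u hu hxu
    simp only [Finset.mem_insert, Finset.mem_singleton] at hx hu
    rcases hx with rfl | rfl | rfl | rfl <;> rcases hu with rfl | rfl | rfl | rfl <;>
      first
      | exact absurd rfl hxu
      | assumption
      | exact fun h => nab h.symm
      | exact fun h => nac h.symm
      | exact fun h => nad h.symm
      | exact fun h => nbc h.symm
      | exact fun h => nbd h.symm
      | exact fun h => ncd h.symm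

private lemma walk_closed {Qp : V → Prop} (hQ : ∀ u v, Qp u → G.Adj u v → Qp v) :
    ∀ {a b : V}, G.Walk a b → Qp a → Qp b := by
  intro a b w
  induction w with
  | nil => exact id
  | cons h p ih => exact fun ha => ih (hQ _ _ ha h)

private lemma twoPos' {l : List V} {a c : V} (ha : a ∈ l) (hc : c ∈ l) (hne : a ≠ c) :
    (∃ as ms bs, l = as ++ a :: (ms ++ c :: bs)) ∨
      (∃ as ms bs, l = as ++ c :: (ms ++ a :: bs)) := by
  obtain ⟨as, bs, rfl⟩ := List.append_of_mem ha
  rcases List.mem_append.mp hc with h | h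
  · obtain ⟨p, q, rfl⟩ := List.append_of_mem h
    right
    exact ⟨p, q, bs, by simp⟩
  · rcases List.mem_cons.mp h with rfl | h
    · exact absurd rfl hne
    · obtain ⟨p, q, rfl⟩ := List.append_of_mem h
      left
      exact ⟨as, p, q, by simp⟩

private lemma mem_of_getLast?' {l : List V} {x : V} (h : l.getLast? = some x) : x ∈ l := by
  obtain ⟨h', rfl⟩ := List.mem_getLast?_eq_getLast (x := x) (by rw [h]; rfl)
  exact List.getLast_mem h'

private lemma mem_of_head?' {l : List V} {x : V} (h : l.head? = some x) : x ∈ l := by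
  cases l with
  | nil => simp at h
  | cons a t =>
    rw [List.head?_cons] at h
    injection h with h
    rw [← h]
    exact List.mem_cons_self

private lemma head?_append_left {l1 l2 : List V} {x : V} (h : l1.head? = some x) :
    (l1 ++ l2).head? = some x := by
  cases l1 with
  | nil => simp at h
  | cons a t => simpa using h

private lemma ne_of_head {l1 l2 : List V} {a x : V}
    (hnd : (l1 ++ a :: l2).Nodup) (hh : (l1 ++ a :: l2).head? = some x) (h1 : l1 ≠ []) :
    a ≠ x := by
  cases l1 with
  | nil => exact absurd rfl h1
  | cons c t =>
    rw [List.cons_append] at hnd hh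
    rw [List.head?_cons] at hh
    injection hh with hh
    subst hh
    intro h
    subst h
    exact (List.nodup_cons.mp hnd).1 (by simp)

private lemma ne_of_getLast {l1 l2 : List V} {a x : V}
    (hnd : (l1 ++ a :: l2).Nodup) (hh : (l1 ++ a :: l2).getLast? = some x) (h2 : l2 ≠ []) :
    a ≠ x := by
  rw [List.getLast?_append_of_ne_nil _ (by simp)] at hh
  obtain ⟨h', rfl⟩ := List.mem_getLast?_eq_getLast (x := x) (by rw [hh]; rfl)
  have hmem : (a :: l2).getLast h' ∈ l2 := by
    rw [List.getLast_cons h2]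
    exact List.getLast_mem h2
  have hnin : a ∉ l2 := (List.nodup_cons.mp (List.nodup_append'.mp hnd).2.1).1
  intro h
  rw [h] at hnin
  exact hnin hmem

private lemma head_ne_getLast {l : List V} {a b : V} (h1 : l.head? = some a)
    (h2 : l.getLast? = some b) (hnd : l.Nodup) (hl : 2 ≤ l.length) : a ≠ b := by
  cases l with
  | nil => simp at h1
  | cons c t =>
    rw [List.head?_cons] at h1
    injection h1 with h1
    cases t with
    | nil => simp at hl
    | cons d t' =>
      have hbmem : b ∈ d :: t' := by
        have h3 : ((d : V) :: t').getLast? = some b := by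
          have h4 := List.getLast?_append_of_ne_nil (l₁ := [c]) (l₂ := d :: t') (by simp)
          rw [List.singleton_append] at h4
          rw [← h4]
          exact h2
        exact mem_of_getLast?' h3
      have hcn : c ∉ d :: t' := (List.nodup_cons.mp hnd).1
      rw [← h1]
      intro h
      rw [h] at hcn
      exact hcn hbmem

end Aux

/-- If `G` is connected with independence number at most `3` and
`Δ(G) - δ(G) ≤ 1`, then `G` has a spanning (Hamiltonian) path. -/
theorem hamiltonian_path_of_alpha_le_three_near_regular
    {V : Type} [Fintype V] [DecidableEq V] (G : SimpleGraph V) [DecidableRel G.Adj]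
    (hconn : G.Connected)
    (hα : ∀ s : Finset V, (∀ a ∈ s, ∀ b ∈ s, a ≠ b → ¬ G.Adj a b) → s.card ≤ 3)
    (hdeg : G.maxDegree - G.minDegree ≤ 1) :
    ∃ (u v : V) (p : G.Walk u v), p.IsHamiltonian := by
  classical
  obtain ⟨xs, hchain, hnodup, hlong⟩ := exists_max_chain G
  by_cases hall : ∀ v : V, v ∈ xs
  · have hne : xs ≠ [] := by
      obtain ⟨v⟩ := hconn.nonempty
      intro h
      rw [h] at hall
      exact absurd (hall v) List.not_mem_nil
    obtain ⟨a, b, w, hw⟩ := exists_walk_of_chain G xs hne hchain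
    exact ⟨a, b, w, fun v => by rw [hw]; exact List.count_eq_one_of_mem hnodup (hall v)⟩
  · push_neg at hall
    obtain ⟨y, hy⟩ := hall
    exfalso
    have build : ∀ (zs ys : List V), ys.Perm (zs ++ xs) → zs ≠ [] →
        (∀ z ∈ zs, z ∉ xs) → zs.Nodup → ys.Chain' G.Adj → False := by
      intro zs ys hperm hzne hdisj hznd hych
      have hnd : ys.Nodup := hperm.nodup_iff.mpr (List.nodup_append'.mpr ⟨hznd, hnodup, fun _ ha hb => hdisj _ ha hb⟩)
      have hlen := hperm.length_eq
      rw [List.length_append] at hlen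
      have hzpos : 0 < zs.length := List.length_pos_iff.mpr hzne
      have := hlong ys hych hnd
      omega
    have hxsne : xs ≠ [] := by
      intro h
      have h2 := hlong [y] (List.isChain_singleton y) (by simp)
      rw [h] at h2
      simp at h2
    obtain ⟨x1, hx1⟩ : ∃ x1, xs.head? = some x1 := by
      cases xs with
      | nil => exact absurd rfl hxsne
      | cons a t => exact ⟨a, rfl⟩
    obtain ⟨xk, hxk⟩ : ∃ xk, xs.getLast? = some xk :=
      ⟨xs.getLast hxsne, List.getLast?_eq_getLast _⟩
    have hx1mem : x1 ∈ xs := mem_of_head?' hx1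
    have hxkmem : xk ∈ xs := mem_of_getLast?' hxk
    -- L1a : no outside vertex is adjacent to the head
    have L1a : ∀ z, z ∉ xs → ¬ G.Adj z x1 := by
      intro z hz hadj
      refine build [z] (z :: xs) ?_ (by simp) (by simpa using hz) (List.nodup_singleton z) ?_
      · rw [List.singleton_append]
      · refine List.isChain_cons.mpr ⟨?_, hchain⟩
        intro u hu
        rw [hx1] at hu
        rw [Option.mem_some_iff] at hu
        subst hu
        exact hadj
    -- L1b : no outside vertex is adjacent to the last
    have L1b : ∀ z, z ∉ xs → ¬ G.Adj xk z := by
      intro z hz hadj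
      refine build [z] (xs ++ [z]) List.perm_append_comm (by simp) (by simpa using hz)
        (List.nodup_singleton z) ?_
      refine List.isChain_append.mpr ⟨hchain, List.isChain_singleton _, ?_⟩
      intro u hu v hv
      rw [hxk, Option.mem_some_iff] at hu
      rw [List.head?_cons, Option.mem_some_iff] at hv
      subst hu; subst hv
      exact hadj
    -- L2 : there is a crossing edge
    have L2 : ∃ x, x ∈ xs ∧ ∃ z, z ∉ xs ∧ G.Adj z x := by
      by_contra hno
      push_neg at hno
      obtain ⟨w⟩ := hconn.preconnected x1 y
      have hclosed : ∀ u v2 : V, u ∈ xs → G.Adj u v2 → v2 ∈ xs := by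
        intro u v2 hu hadj
        by_contra hv2
        exact hno u hu v2 hv2 hadj.symm
      exact hy (walk_closed G hclosed w hx1mem)
    -- L3 : head and last are not adjacent
    have L3 : ¬ G.Adj x1 xk := by
      intro hadj
      obtain ⟨xi, hxim, z, hz, hza⟩ := L2
      obtain ⟨as, bs, hEq⟩ := List.append_of_mem hxim
      cases as with
      | nil =>
        rw [hEq] at hx1
        rw [List.nil_append, List.head?_cons] at hx1
        injection hx1 with hx1
        subst hx1
        exact L1a z hz hza
      | cons c as' =>
        rw [hEq] at hx1
        rw [List.cons_append, List.head?_cons] at hx1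
        injection hx1 with hc
        subst hc
        have hch' := hchain
        rw [hEq] at hch'
        obtain ⟨cA, cB, lAB⟩ := List.isChain_append.mp hch'
        have hxk' : (xi :: bs).getLast? = some xk := by
          rw [hEq, List.getLast?_append_of_ne_nil _ (by simp)] at hxk
          exact hxk
        refine build [z] (z :: ((xi :: bs) ++ c :: as')) ?_ (by simp) (by simpa using hz)
          (List.nodup_singleton z) ?_
        · rw [hEq, List.singleton_append]
          exact List.Perm.cons z List.perm_append_comm
        · refine List.isChain_cons.mpr ⟨?_, ?_⟩
          · intro u hu
            rw [List.cons_append, List.head?_cons, Option.mem_some_iff] at hu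
            subst hu
            exact hza
          · refine List.isChain_append.mpr ⟨cB, cA, ?_⟩
            intro u hu v hv
            rw [hxk', Option.mem_some_iff] at hu
            rw [List.head?_cons, Option.mem_some_iff] at hv
            subst hu; subst hv
            exact hadj.symm
    -- x1 ≠ xk
    have hx1k : x1 ≠ xk := by
      have h2 : 2 ≤ xs.length := by
        by_contra hlt
        push_neg at hlt
        obtain ⟨xi, hxim, z, hz, hza⟩ := L2
        have hxs1 : xs = [x1] := by
          cases xs with
          | nil => exact absurd rfl hxsne
          | cons a t =>
            cases t with
            | nil =>
              rw [List.head?_cons] at hx1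
              injection hx1 with hx1
              rw [hx1]
            | cons b t' => simp at hlt
        rw [hxs1, List.mem_singleton] at hxim
        subst hxim
        exact L1a z hz hza
      exact head_ne_getLast hx1 hxk hnodup h2
    -- L4 : the outside is a clique
    have L4 : ∀ z w, z ∉ xs → w ∉ xs → z ≠ w → G.Adj z w := by
      intro z w hz hw hzw
      by_contra hnadj
      exact no_indep4 G hα hx1k (fun h => hz (by rw [← h]; exact hx1mem))
        (fun h => hw (by rw [← h]; exact hx1mem))
        (fun h => hz (by rw [← h]; exact hxkmem)) (fun h => hw (by rw [← h]; exact hxkmem)) hzw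
        L3 (fun h => L1a z hz h.symm) (fun h => L1a w hw h.symm)
        (L1b z hz) (L1b w hw) hnadj
    -- L5 : no two consecutive path vertices both have outside neighbours
    have L5 : ∀ (as : List V) (a b : V) (bs : List V), xs = as ++ a :: b :: bs →
        ∀ z w, z ∉ xs → w ∉ xs → G.Adj z a → G.Adj w b → False := by
      intro as a b bs hEq z w hz hw hza hwb
      have hch' := hchain
      rw [hEq] at hch'
      obtain ⟨cA, cB, lAB⟩ := List.isChain_append.mp hch'
      have cB' : (b :: bs).Chain' G.Adj := (List.isChain_cons_cons.mp cB).2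
      by_cases hzw : z = w
      · subst hzw
        refine build [z] (as ++ a :: z :: b :: bs) ?_ (by simp) (by simpa using hz)
          (List.nodup_singleton z) ?_
        · rw [hEq]
          refine List.perm_iff_count.mpr fun x => ?_
          simp only [List.count_append, List.count_cons, List.count_nil, List.singleton_append]
          split_ifs <;> omega
        · refine List.isChain_append.mpr ⟨cA, ?_, ?_⟩
          · exact List.isChain_cons_cons.mpr ⟨hza.symm, List.isChain_cons_cons.mpr ⟨hwb, cB'⟩⟩
          · intro u hu v hv
            rw [List.head?_cons, Option.mem_some_iff] at hv
            subst hv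
            exact lAB u hu a (by simp)
      · have hzwadj := L4 z w hz hw hzw
        refine build [z, w] (as ++ a :: z :: w :: b :: bs) ?_ (by simp) ?_ (by simp [hzw]) ?_
        · rw [hEq]
          refine List.perm_iff_count.mpr fun x => ?_
          simp only [List.count_append, List.count_cons, List.count_nil]
          split_ifs <;> omega
        · intro u hu
          simp only [List.mem_cons, List.mem_singleton, List.not_mem_nil, or_false] at hu
          rcases hu with rfl | rfl
          · exact hz
          · exact hw
        · refine List.isChain_append.mpr ⟨cA, ?_, ?_⟩
          · exact List.isChain_cons_cons.mpr ⟨hza.symm,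
              List.isChain_cons_cons.mpr ⟨hzwadj, List.isChain_cons_cons.mpr ⟨hwb, cB'⟩⟩⟩
          · intro u hu v hv
            rw [List.head?_cons, Option.mem_some_iff] at hv
            subst hv
            exact lAB u hu a (by simp)
    -- L6 : if some path vertex has an outside neighbour, x1 is not adjacent to its successor
    have L6 : ∀ (as : List V) (a b : V) (bs : List V), xs = as ++ a :: b :: bs →
        ∀ z, z ∉ xs → G.Adj z a → ¬ G.Adj x1 b := by
      intro as a b bs hEq z hz hza hx1b
      cases as with
      | nil =>
        rw [hEq, List.nil_append, List.head?_cons] at hx1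
        injection hx1 with hx1
        subst hx1
        exact L1a z hz hza
      | cons c as' =>
        have hch' := hchain
        rw [hEq] at hch'
        obtain ⟨cA, cB, lAB⟩ := List.isChain_append.mp hch'
        have cB' : (b :: bs).Chain' G.Adj := (List.isChain_cons_cons.mp cB).2
        have hc : c = x1 := by
          rw [hEq, List.cons_append, List.head?_cons] at hx1
          injection hx1
        subst hc
        refine build [z] (z :: a :: ((c :: as').reverse ++ b :: bs)) ?_ (by simp)
          (by simpa using hz) (List.nodup_singleton z) ?_
        · rw [hEq]
          refine List.perm_iff_count.mpr fun x => ?_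
          simp only [List.count_append, List.count_cons, List.count_nil, List.count_reverse,
            List.singleton_append]
          split_ifs <;> omega
        · refine List.isChain_cons.mpr ⟨?_, ?_⟩
          · intro u hu
            rw [List.head?_cons, Option.mem_some_iff] at hu
            subst hu
            exact hza
          · refine List.isChain_cons.mpr ⟨?_, ?_⟩
            · intro u hu
              rw [head?_append_left (l2 := b :: bs)
                (by rw [List.head?_reverse]; exact List.getLast?_eq_getLast (by simp)),
                Option.mem_some_iff] at hu
              subst hu
              exact (lAB _ (List.getLast?_eq_getLast (by simp)) a (by simp)).symm
            · refine List.isChain_append.mpr ⟨?_, cB', ?_⟩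
              · rw [List.isChain_reverse]
                exact List.IsChain.imp (fun p q h => h.symm) cA
              · intro u hu v hv
                rw [List.getLast?_reverse, List.head?_cons, Option.mem_some_iff] at hu
                rw [List.head?_cons, Option.mem_some_iff] at hv
                subst hu; subst hv
                exact hx1b
    -- L7 : successor of an attachment vertex is adjacent to xk
    have L7 : ∀ (as : List V) (a b : V) (bs : List V), xs = as ++ a :: b :: bs →
        ∀ z, z ∉ xs → G.Adj z a → b ≠ xk → G.Adj b xk := by
      intro as a b bs hEq z hz hza hbk
      by_contra hn
      have hbmem : b ∈ xs := by rw [hEq]; simp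
      have hEq2 : xs = (as ++ [a]) ++ b :: bs := by rw [hEq]; simp
      have hbx1 : b ≠ x1 := ne_of_head (hEq2 ▸ hnodup) (hEq2 ▸ hx1) (by simp)
      exact no_indep4 G hα hx1k (fun h => hz (by rw [← h]; exact hx1mem)) hbx1.symm
        (fun h => hz (by rw [← h]; exact hxkmem)) (Ne.symm hbk)
        (fun h => hz (by rw [h]; exact hbmem))
        L3 (fun h => L1a z hz h.symm) (L6 as a b bs hEq z hz hza)
        (L1b z hz) (fun h => hn h.symm)
        (fun h => L5 as a b bs hEq z z hz hz hza h)
    -- L8 : two distinct attachment vertices are impossible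
    have L8 : ∀ (as : List V) (a : V) (ms : List V) (c : V) (bs : List V),
        xs = as ++ a :: (ms ++ c :: bs) →
        ∀ z w, z ∉ xs → w ∉ xs → G.Adj z a → G.Adj w c → False := by
      intro as a ms c bs hEq z w hz hw hza hwc
      cases ms with
      | nil => exact L5 as a c bs (by rw [hEq]; simp) z w hz hw hza hwc
      | cons b ms' =>
        have hEq1 : xs = as ++ a :: b :: (ms' ++ c :: bs) := by rw [hEq]; simp
        have hEq2 : xs = (as ++ [a]) ++ b :: (ms' ++ c :: bs) := by rw [hEq]; simp
        have hbxk : b ≠ xk := ne_of_getLast (hEq2 ▸ hnodup) (hEq2 ▸ hxk) (by simp)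
        have hbk : G.Adj b xk := L7 as a b (ms' ++ c :: bs) hEq1 z hz hza hbxk
        have hbs : bs ≠ [] := by
          rintro rfl
          have hEq3 : xs = (as ++ a :: b :: ms') ++ [c] := by rw [hEq]; simp
          have hcxk : c = xk := by
            rw [hEq3, List.getLast?_concat] at hxk
            injection hxk
          subst hcxk
          exact L1b w hw hwc.symm
        have hch' := hchain
        rw [hEq1] at hch'
        obtain ⟨cA, cB, lAB⟩ := List.isChain_append.mp hch'
        have cB2 : (b :: (ms' ++ c :: bs)).Chain' G.Adj := (List.isChain_cons_cons.mp cB).2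
        obtain ⟨cM, cC, lMC⟩ := List.isChain_append.mp
          (show ((b :: ms') ++ c :: bs).Chain' G.Adj by simpa using cB2)
        have cCb : bs.Chain' G.Adj := cC.tail
        have hbs_last : bs.getLast? = some xk := by
          have hEq4 : xs = (as ++ a :: b :: ms' ++ [c]) ++ bs := by rw [hEq]; simp
          rw [hEq4, List.getLast?_append_of_ne_nil _ hbs] at hxk
          exact hxk
        have cMc : ((b :: ms') ++ [c]).Chain' G.Adj := by
          refine List.isChain_append.mpr ⟨cM, List.isChain_singleton _, ?_⟩
          intro u hu v hv
          rw [List.head?_cons, Option.mem_some_iff] at hv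
          subst hv
          exact lMC u hu c (by simp)
        have cRev : (((b :: ms') ++ [c]).reverse).Chain' G.Adj := by
          rw [List.Chain', List.isChain_reverse]
          exact List.IsChain.imp (fun p q h => h.symm) cMc
        have ctail : ((((b :: ms') ++ [c]).reverse) ++ bs.reverse).Chain' G.Adj := by
          refine List.isChain_append.mpr ⟨cRev, ?_, ?_⟩
          · rw [List.isChain_reverse]
            exact List.IsChain.imp (fun p q h => h.symm) cCb
          · intro u hu v hv
            rw [List.getLast?_reverse] at hu
            rw [List.head?_reverse, hbs_last, Option.mem_some_iff] at hv
            rw [show ((b :: ms') ++ [c]).head? = some b from rfl, Option.mem_some_iff] at hu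
            subst hu; subst hv
            exact hbk
        have htailhead : ((((b :: ms') ++ [c]).reverse) ++ bs.reverse).head? = some c := by
          refine head?_append_left ?_
          rw [List.head?_reverse]
          exact List.getLast?_concat
        by_cases hzw : z = w
        · subst hzw
          refine build [z] (as ++ a :: z :: ((((b :: ms') ++ [c]).reverse) ++ bs.reverse))
            ?_ (by simp) (by simpa using hz) (List.nodup_singleton z) ?_
          · rw [hEq1]
            refine List.perm_iff_count.mpr fun x => ?_
            simp only [List.count_append, List.count_cons, List.count_nil, List.count_reverse,
              List.singleton_append]
            split_ifs <;> omega
          · refine List.isChain_append.mpr ⟨cA, ?_, ?_⟩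
            · refine List.isChain_cons_cons.mpr ⟨hza.symm, ?_⟩
              refine List.isChain_cons.mpr ⟨?_, ctail⟩
              intro u hu
              rw [htailhead, Option.mem_some_iff] at hu
              subst hu
              exact hwc
            · intro u hu v hv
              rw [List.head?_cons, Option.mem_some_iff] at hv
              subst hv
              exact lAB u hu a (by simp)
        · have hzwadj := L4 z w hz hw hzw
          refine build [z, w] (as ++ a :: z :: w :: ((((b :: ms') ++ [c]).reverse) ++ bs.reverse))
            ?_ (by simp) ?_ (by simp [hzw]) ?_
          · rw [hEq1]
            refine List.perm_iff_count.mpr fun x => ?_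
            simp only [List.count_append, List.count_cons, List.count_nil, List.count_reverse]
            split_ifs <;> omega
          · intro u hu
            simp only [List.mem_cons, List.mem_singleton, List.not_mem_nil, or_false] at hu
            rcases hu with rfl | rfl
            · exact hz
            · exact hw
          · refine List.isChain_append.mpr ⟨cA, ?_, ?_⟩
            · refine List.isChain_cons_cons.mpr ⟨hza.symm, ?_⟩
              refine List.isChain_cons_cons.mpr ⟨hzwadj, ?_⟩
              refine List.isChain_cons.mpr ⟨?_, ctail⟩
              intro u hu
              rw [htailhead, Option.mem_some_iff] at hu
              subst hu
              exact hwc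
            · intro u hu v hv
              rw [List.head?_cons, Option.mem_some_iff] at hv
              subst hv
              exact lAB u hu a (by simp)
    -- L9 : unique attachment vertex
    obtain ⟨xi, hximem, ⟨z, hz, hza⟩, huni⟩ :
        ∃ xi, xi ∈ xs ∧ (∃ z, z ∉ xs ∧ G.Adj z xi) ∧
          ∀ x', x' ∈ xs → ∀ w', w' ∉ xs → G.Adj w' x' → x' = xi := by
      obtain ⟨xi, hxim, z, hz, hza⟩ := L2
      refine ⟨xi, hxim, ⟨z, hz, hza⟩, ?_⟩
      intro x' hx' w' hw' hwx'
      by_contra hne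
      rcases twoPos' hxim hx' (fun h => hne h.symm) with ⟨as, ms, bs, hEq⟩ | ⟨as, ms, bs, hEq⟩
      · exact L8 as xi ms x' bs hEq z w' hz hw' hza hwx'
      · exact L8 as x' ms xi bs hEq w' z hw' hz hwx' hza
    -- decompose at xi
    obtain ⟨asI, bsI, hEqI⟩ := List.append_of_mem hximem
    have hasI : asI ≠ [] := by
      rintro rfl
      rw [hEqI, List.nil_append, List.head?_cons] at hx1
      injection hx1 with hx1
      subst hx1
      exact L1a z hz hza
    have hbsI : bsI ≠ [] := by
      rintro rfl
      have hlast : xs.getLast? = some xi := by rw [hEqI]; exact List.getLast?_concat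
      rw [hxk] at hlast
      injection hlast with hlast
      subst hlast
      exact L1b z hz hza.symm
    have hch' := hchain
    rw [hEqI] at hch'
    obtain ⟨cAI, cBI, lABI⟩ := List.isChain_append.mp hch'
    have hnd' := hnodup
    rw [hEqI] at hnd'
    obtain ⟨ndA, ndB, disjAB⟩ := List.nodup_append'.mp hnd'
    obtain ⟨prev, hprev⟩ : ∃ p, asI.getLast? = some p :=
      ⟨asI.getLast hasI, List.getLast?_eq_getLast _⟩
    obtain ⟨next, hnext⟩ : ∃ q, bsI.head? = some q := by
      cases bsI with
      | nil => exact absurd rfl hbsI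
      | cons q t => exact ⟨q, rfl⟩
    have hprevmem : prev ∈ asI := mem_of_getLast?' hprev
    have hnextmem : next ∈ bsI := mem_of_head?' hnext
    have hprevadj : G.Adj prev xi := lABI prev (by rw [hprev]; rfl) xi (by simp)
    have hnextadj : G.Adj xi next :=
      (List.isChain_cons.mp cBI).1 next (by rw [hnext]; rfl)
    set Rfin : Finset V := Finset.univ.filter (fun v => v ∉ xs) with hRdef
    set r : ℕ := Rfin.card with hrdef
    have hyR : y ∈ Rfin := by simp [hRdef, hy]
    have hrpos : 1 ≤ r := Finset.card_pos.mpr ⟨y, hyR⟩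
    have hdeg2 : ∀ u v : V, G.degree u ≤ G.degree v + 1 := by
      intro u v
      have h1 : G.maxDegree ≤ G.minDegree + 1 := by omega
      have h2 := G.degree_le_maxDegree u
      have h3 := G.minDegree_le_degree v
      omega
    have hprevxs : prev ∈ xs := by rw [hEqI]; exact List.mem_append_left _ hprevmem
    have hnextxs : next ∈ xs := by
      rw [hEqI]; exact List.mem_append_right _ (List.mem_cons_of_mem _ hnextmem)
    have hprevnext : prev ≠ next := by
      intro h
      exact disjAB hprevmem (by rw [h]; exact List.mem_cons_of_mem _ hnextmem)
    by_cases hS : ∀ v, v ∉ xs → G.Adj v xi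
    · -- xi adjacent to all of the outside : degree contradiction
      have hsub : Rfin ∪ {prev, next} ⊆ G.neighborFinset xi := by
        intro u hu
        rw [Finset.mem_union] at hu
        rw [SimpleGraph.mem_neighborFinset]
        rcases hu with hu | hu
        · have hu' : u ∉ xs := by simpa [hRdef] using hu
          exact (hS u hu').symm
        · rw [Finset.mem_insert, Finset.mem_singleton] at hu
          rcases hu with rfl | rfl
          · exact hprevadj.symm
          · exact hnextadj
      have hdisj : Disjoint Rfin ({prev, next} : Finset V) := by
        rw [Finset.disjoint_left]
        intro u hu h2
        have hu' : u ∉ xs := by simpa [hRdef] using hu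
        rw [Finset.mem_insert, Finset.mem_singleton] at h2
        rcases h2 with rfl | rfl
        · exact hu' hprevxs
        · exact hu' hnextxs
      have hcard2 : ({prev, next} : Finset V).card = 2 := by
        rw [Finset.card_insert_of_notMem (by simp [hprevnext]), Finset.card_singleton]
      have hcardU : (Rfin ∪ {prev, next}).card = r + 2 := by
        rw [Finset.card_union_of_disjoint hdisj, hcard2]
      have hddxi : G.degree xi = (G.neighborFinset xi).card := rfl
      have hdi : r + 2 ≤ G.degree xi := by
        rw [hddxi, ← hcardU]
        exact Finset.card_le_card hsub
      have hddy : G.degree y = (G.neighborFinset y).card := rfl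
      have hdy : G.degree y ≤ r := by
        have hsub2 : G.neighborFinset y ⊆ insert xi (Rfin.erase y) := by
          intro v hv
          rw [SimpleGraph.mem_neighborFinset] at hv
          by_cases hvxs : v ∈ xs
          · rw [huni v hvxs y hy hv]
            exact Finset.mem_insert_self _ _
          · refine Finset.mem_insert_of_mem (Finset.mem_erase.mpr
              ⟨Ne.symm (G.ne_of_adj hv), by simp [hRdef, hvxs]⟩)
        have h1 := Finset.card_le_card hsub2
        have h2 := Finset.card_insert_le xi (Rfin.erase y)
        rw [Finset.card_erase_of_mem hyR] at h2
        omega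
      have := hdeg2 xi y
      omega
    · push_neg at hS
      obtain ⟨y0, hy0, hy0n⟩ := hS
      have hy0R : y0 ∈ Rfin := by simp [hRdef, hy0]
      have hNy0 : G.neighborFinset y0 ⊆ Rfin.erase y0 := by
        intro v hv
        rw [SimpleGraph.mem_neighborFinset] at hv
        by_cases hvxs : v ∈ xs
        · have hvxi := huni v hvxs y0 hy0 hv
          rw [hvxi] at hv
          exact absurd hv hy0n
        · exact Finset.mem_erase.mpr ⟨Ne.symm (G.ne_of_adj hv), by simp [hRdef, hvxs]⟩
      have hddy0 : G.degree y0 = (G.neighborFinset y0).card := rfl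
      have hdy0 : G.degree y0 + 1 ≤ r := by
        have h1 := Finset.card_le_card hNy0
        rw [Finset.card_erase_of_mem hy0R] at h1
        omega
      have hdall : ∀ v, G.degree v ≤ r := by
        intro v
        have := hdeg2 v y0
        omega
      have hzR : z ∈ Rfin := by simp [hRdef, hz]
      have hRadj : ∀ a2 ∈ Rfin, ∀ b2 ∈ Rfin, a2 ≠ b2 → G.Adj a2 b2 := by
        intro a2 ha b2 hb hab
        have ha' : a2 ∉ xs := by simpa [hRdef] using ha
        have hb' : b2 ∉ xs := by simpa [hRdef] using hb
        exact L4 a2 b2 ha' hb' hab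
      obtain ⟨rs, hrs_chain, hrs_nodup, hrs_mem, hrs_last, hrs_len⟩ :=
        exists_clique_list G r Rfin rfl hRadj z hzR
      have hrs_nxs : ∀ u, u ∈ rs → u ∉ xs := by
        intro u hu
        have := (hrs_mem u).mp hu
        simpa [hRdef] using this
      have cmp1 : rs.length + (bsI.length + 1) ≤ xs.length := by
        have hch2 : (rs ++ xi :: bsI).Chain' G.Adj := by
          refine List.isChain_append.mpr ⟨hrs_chain, cBI, ?_⟩
          intro u hu v hv
          rw [hrs_last, Option.mem_some_iff] at hu
          rw [List.head?_cons, Option.mem_some_iff] at hv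
          subst hu; subst hv
          exact hza
        have hnd2 : (rs ++ xi :: bsI).Nodup := by
          rw [List.nodup_append']
          refine ⟨hrs_nodup, ndB, ?_⟩
          intro u hu hu2
          exact hrs_nxs u hu (by rw [hEqI]; exact List.mem_append_right _ hu2)
        have := hlong _ hch2 hnd2
        rw [List.length_append, List.length_cons] at this
        omega
      have cmp2 : rs.length + (asI.length + 1) ≤ xs.length := by
        have hch2 : (rs ++ xi :: asI.reverse).Chain' G.Adj := by
          refine List.isChain_append.mpr ⟨hrs_chain, ?_, ?_⟩
          · refine List.isChain_cons.mpr ⟨?_, ?_⟩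
            · intro u hu
              rw [List.head?_reverse, hprev, Option.mem_some_iff] at hu
              subst hu
              exact hprevadj.symm
            · rw [List.isChain_reverse]
              exact List.IsChain.imp (fun p q h => h.symm) cAI
          · intro u hu v hv
            rw [hrs_last, Option.mem_some_iff] at hu
            rw [List.head?_cons, Option.mem_some_iff] at hv
            subst hu; subst hv
            exact hza
        have hnd2 : (rs ++ xi :: asI.reverse).Nodup := by
          rw [List.nodup_append']
          refine ⟨hrs_nodup, ?_, ?_⟩
          · rw [List.nodup_cons]
            refine ⟨?_, List.nodup_reverse.mpr ndA⟩
            rw [List.mem_reverse]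
            intro h
            exact disjAB h (List.mem_cons_self)
          · intro u hu hu2
            rw [List.mem_cons, List.mem_reverse] at hu2
            refine hrs_nxs u hu ?_
            rw [hEqI]
            rcases hu2 with rfl | hu2
            · exact List.mem_append_right _ (List.mem_cons_self)
            · exact List.mem_append_left _ hu2
        have := hlong _ hch2 hnd2
        rw [List.length_append, List.length_cons, List.length_reverse] at this
        omega
      have hklen : xs.length = asI.length + 1 + bsI.length := by
        rw [hEqI, List.length_append, List.length_cons]
        omega
      set Q : Finset V := xs.toFinset.filter (fun u => u ≠ xi ∧ ¬ G.Adj xi u) with hQdef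
      have hkcard : xs.toFinset.card = xs.length := List.toFinset_card_of_nodup hnodup
      have hNxiz : z ∈ G.neighborFinset xi := (G.mem_neighborFinset xi z).mpr hza.symm
      have hsubQ : xs.toFinset ⊆ Q ∪ insert xi ((G.neighborFinset xi).erase z) := by
        intro u hu
        rw [Finset.mem_union]
        by_cases h1 : u = xi
        · exact Or.inr (by rw [h1]; exact Finset.mem_insert_self _ _)
        by_cases h2 : G.Adj xi u
        · refine Or.inr (Finset.mem_insert_of_mem (Finset.mem_erase.mpr
            ⟨?_, (G.mem_neighborFinset xi u).mpr h2⟩))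
          intro h
          rw [List.mem_toFinset] at hu
          rw [h] at hu
          exact hz hu
        · exact Or.inl (Finset.mem_filter.mpr ⟨hu, h1, h2⟩)
      have hQcard : xs.length ≤ Q.card + r := by
        have h1 := Finset.card_le_card hsubQ
        have h2 := Finset.card_union_le Q (insert xi ((G.neighborFinset xi).erase z))
        have h3 := Finset.card_insert_le xi ((G.neighborFinset xi).erase z)
        have h4 : ((G.neighborFinset xi).erase z).card = (G.neighborFinset xi).card - 1 :=
          Finset.card_erase_of_mem hNxiz
        have h5 := hdall xi
        have hddxi : G.degree xi = (G.neighborFinset xi).card := rfl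
        omega
      have hQr : r + 1 ≤ Q.card := by omega
      have hQmem : ∀ u, u ∈ Q → u ∈ xs ∧ u ≠ xi ∧ ¬ G.Adj xi u := by
        intro u hu
        rw [hQdef, Finset.mem_filter, List.mem_toFinset] at hu
        exact hu
      have hQclique : ∀ u, u ∈ Q → ∀ v, v ∈ Q → u ≠ v → G.Adj u v := by
        intro u hu v hv huv
        obtain ⟨huxs, huxi, hunadj⟩ := hQmem u hu
        obtain ⟨hvxs, hvxi, hvnadj⟩ := hQmem v hv
        by_contra hnuv
        exact no_indep4 G hα (a := xi) (b := y0) (c := u) (d := v)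
          (fun h => hy0 (by rw [← h]; exact hximem))
          (Ne.symm huxi) (Ne.symm hvxi)
          (fun h => hy0 (by rw [h]; exact huxs))
          (fun h => hy0 (by rw [h]; exact hvxs)) huv
          (fun h => hy0n h.symm) hunadj hvnadj
          (fun h => huxi (huni u huxs y0 hy0 h))
          (fun h => hvxi (huni v hvxs y0 hy0 h))
          hnuv
      obtain ⟨u0, hu0⟩ := Finset.card_pos.mp (show 0 < Q.card by omega)
      have hdduQ : ∀ u, u ∈ Q → G.neighborFinset u = Q.erase u := by
        intro u hu
        have hsub2 : Q.erase u ⊆ G.neighborFinset u := by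
          intro v hv
          obtain ⟨hvu, hvQ⟩ := Finset.mem_erase.mp hv
          exact (G.mem_neighborFinset u v).mpr (hQclique u hu v hvQ (Ne.symm hvu))
        refine (Finset.eq_of_subset_of_card_le hsub2 ?_).symm
        rw [Finset.card_erase_of_mem hu]
        have h5 := hdall u
        have hddu : G.degree u = (G.neighborFinset u).card := rfl
        omega
      have hstep : ∀ u v2, u ∈ Q → G.Adj u v2 → v2 ∈ Q := by
        intro u v2 hu hadj
        have h1 : v2 ∈ G.neighborFinset u := (G.mem_neighborFinset u v2).mpr hadj
        rw [hdduQ u hu] at h1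
        exact Finset.mem_of_mem_erase h1
      obtain ⟨w⟩ := hconn.preconnected u0 y0
      have hy0Q : y0 ∈ Q := walk_closed G hstep w hu0
      exact hy0 (hQmem y0 hy0Q).1
end
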